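/- arXiv:1611.04069 — 6 statements merged into one kernel-verified Lean document; each statement's English description precedes it below -/
import Mathlib

section
/- Fix E ∈ ℂ^{m×M}, a unit vector d ∈ ℂ^m, λ > 0, and a > λ. The vector ĉ ∈ ℂ^M defined coordinatewise by ĉ_j = min(|H_λ(b)_j|, a) · e^{i∠b_j}, where b = E^H d and H_λ zeros out entries of b with magnitude less than λ and leaves other entries unchanged, is a global minimizer of the function c ↦ ‖E − d c^H‖_F² + λ² ‖c‖₀ subject to ‖c‖_∞ ≤ a. -/
open Finset

lemma entry_sq (x y z : ℂ) :
    ‖x - y * (starRingEnd ℂ) z‖ ^ 2 =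
      ‖x‖ ^ 2 + ‖y‖ ^ 2 * ‖z‖ ^ 2 - 2 * (x * (starRingEnd ℂ) y * z).re := by
  have h : ∀ w : ℂ, ‖w‖ ^ 2 = w.re ^ 2 + w.im ^ 2 := fun w => by
    rw [Complex.sq_norm, Complex.normSq_apply]; ring
  simp only [h, Complex.sub_re, Complex.sub_im, Complex.mul_re, Complex.mul_im,
    Complex.conj_re, Complex.conj_im]
  ring

lemma key_point (lam a : ℝ) (hlam : 0 < lam) (ha : lam < a) (b : ℂ)
    (chat : ℂ)
    (hchat : chat = (min ‖if ‖b‖ < lam then (0 : ℂ) else b‖ a : ℝ) *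
        (if b = 0 then 1 else b / (‖b‖ : ℂ))) :
    ‖chat‖ ≤ a ∧ ∀ z : ℂ, ‖z‖ ≤ a →
      ‖chat‖ ^ 2 - 2 * ((starRingEnd ℂ) b * chat).re
          + lam ^ 2 * (if chat = 0 then (0:ℝ) else 1)
        ≤ ‖z‖ ^ 2 - 2 * ((starRingEnd ℂ) b * z).re
          + lam ^ 2 * (if z = 0 then (0:ℝ) else 1) := by
  have ha0 : (0:ℝ) < a := hlam.trans ha
  by_cases hlt : ‖b‖ < lam
  · -- thresholded to zero
    have hc0 : chat = 0 := by
      rw [hchat, if_pos hlt]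
      simp [min_eq_left ha0.le]
    subst hc0
    constructor
    · simpa using ha0.le
    intro z hz
    by_cases hz0 : z = 0
    · simp [hz0]
    · have h0 : (if (0:ℂ) = 0 then (0:ℝ) else 1) = 0 := if_pos rfl
      simp only [if_neg hz0, h0, norm_zero, mul_zero, Complex.zero_re, eq_self_iff_true, if_true]
      have hre : ((starRingEnd ℂ) b * z).re ≤ ‖b‖ * ‖z‖ := by
        calc ((starRingEnd ℂ) b * z).re ≤ ‖(starRingEnd ℂ) b * z‖ := Complex.re_le_norm _
          _ = ‖b‖ * ‖z‖ := by rw [norm_mul, RCLike.norm_conj]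
      have hznn : (0:ℝ) ≤ ‖z‖ := norm_nonneg _
      nlinarith [sq_nonneg (‖z‖ - lam)]
  · push_neg at hlt
    have hb0 : b ≠ 0 := by
      intro h; rw [h] at hlt; simp at hlt; linarith
    have hB : (0:ℝ) < ‖b‖ := lt_of_lt_of_le hlam hlt
    set r : ℝ := min ‖b‖ a with hr
    have hr0 : (0:ℝ) < r := lt_min hB ha0
    have hcval : chat = (r : ℂ) * (b / (‖b‖ : ℂ)) := by
      rw [hchat, if_neg (not_lt.mpr hlt), if_neg hb0]
    have hnormc : ‖chat‖ = r := by
      rw [hcval]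
      rw [norm_mul, norm_div, Complex.norm_real, Complex.norm_real,
        Real.norm_of_nonneg hr0.le, Real.norm_of_nonneg (norm_nonneg b),
        div_self hB.ne', mul_one]
    have hcne : chat ≠ 0 := by
      intro h; rw [h, norm_zero] at hnormc; exact hr0.ne' hnormc.symm
    have hbc : ((‖b‖ : ℝ) : ℂ) ≠ 0 := by exact_mod_cast hB.ne'
    have hb2 : (starRingEnd ℂ) b * b = ((‖b‖ ^ 2 : ℝ) : ℂ) := by
      rw [mul_comm, Complex.mul_conj]
      norm_cast
      simp [Complex.normSq_eq_norm_sq]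
    have hre_c : ((starRingEnd ℂ) b * chat).re = r * ‖b‖ := by
      rw [hcval]
      have : (starRingEnd ℂ) b * ((r : ℂ) * (b / (‖b‖ : ℂ)))
          = ((r * ‖b‖ : ℝ) : ℂ) := by
        calc (starRingEnd ℂ) b * ((r : ℂ) * (b / (‖b‖ : ℂ)))
            = (r : ℂ) * (((starRingEnd ℂ) b * b) / (‖b‖ : ℂ)) := by ring
          _ = (r : ℂ) * (((‖b‖ ^ 2 : ℝ) : ℂ) / (‖b‖ : ℂ)) := by rw [hb2]
          _ = ((r * ‖b‖ : ℝ) : ℂ) := by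
              have h3 : ((‖b‖ ^ 2 : ℝ) : ℂ) / (‖b‖ : ℂ) = ((‖b‖ : ℝ) : ℂ) := by
                rw [sq, Complex.ofReal_mul, mul_div_assoc, div_self hbc, mul_one]
              rw [h3, ← Complex.ofReal_mul]
      rw [this, Complex.ofReal_re]
    constructor
    · rw [hnormc]; exact min_le_right _ _
    intro z hz
    rw [hnormc, hre_c, if_neg hcne]
    have hre : ((starRingEnd ℂ) b * z).re ≤ ‖b‖ * ‖z‖ := by
      calc ((starRingEnd ℂ) b * z).re ≤ ‖(starRingEnd ℂ) b * z‖ := Complex.re_le_norm _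
        _ = ‖b‖ * ‖z‖ := by rw [norm_mul, RCLike.norm_conj]
    by_cases hz0 : z = 0
    · -- need r^2 - 2 r B + lam^2 ≤ 0
      subst hz0
      have h0 : (if (0:ℂ) = 0 then (0:ℝ) else 1) = 0 := if_pos rfl
      simp only [norm_zero, mul_zero, Complex.zero_re, h0, eq_self_iff_true, if_true]
      have h1 : r ≤ ‖b‖ := min_le_left _ _
      have h2 : lam ≤ r := le_min hlt ha.le
      nlinarith [mul_nonneg (sub_nonneg.2 h1) hr0.le, mul_le_mul h2 hlt hlam.le hr0.le]
    · simp only [if_neg hz0]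
      have hs : ‖z‖ ≤ a := hz
      have hsn : (0:ℝ) ≤ ‖z‖ := norm_nonneg _
      -- need (B - r)^2 ≤ (B - s)^2
      rcases le_total ‖b‖ a with hba | hab
      · have : r = ‖b‖ := min_eq_left hba
        nlinarith [sq_nonneg (‖z‖ - ‖b‖)]
      · have hra : r = a := min_eq_right hab
        nlinarith [mul_le_mul hs hs hsn (le_of_lt ha0), sq_nonneg (‖z‖ - ‖b‖)]


/-- hard-thresholding sparse coding update is a global minimizer of the
ℓ₀-penalized objective under an ℓ∞ bound. -/
theorem stmt1 (m M : ℕ) (E : Matrix (Fin m) (Fin M) ℂ) (d : Fin m → ℂ)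
    (hd : ∑ i, ‖d i‖ ^ 2 = 1) (lam a : ℝ) (hlam : 0 < lam) (ha : lam < a)
    (b : Fin M → ℂ) (hb : b = fun j => ∑ i, (starRingEnd ℂ) (E i j) * d i)
    (chat : Fin M → ℂ)
    (hchat : chat = fun j =>
      (min ‖if ‖b j‖ < lam then (0 : ℂ) else b j‖ a : ℝ) *
        (if b j = 0 then 1 else b j / (‖b j‖ : ℂ)))
    (F : (Fin M → ℂ) → ℝ)
    (hF : F = fun c => (∑ i, ∑ j, ‖E i j - d i * (starRingEnd ℂ) (c j)‖ ^ 2)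
      + lam ^ 2 * ((Finset.univ.filter (fun j => c j ≠ 0)).card : ℝ)) :
    (∀ j, ‖chat j‖ ≤ a) ∧
      ∀ c : Fin M → ℂ, (∀ j, ‖c j‖ ≤ a) → F chat ≤ F c := by
  have key := fun j => key_point lam a hlam ha (b j) (chat j) (by rw [hchat])
  refine ⟨fun j => (key j).1, ?_⟩
  intro c hc
  have hcol : ∀ (w : Fin M → ℂ) (j), ∑ i, ‖E i j - d i * (starRingEnd ℂ) (w j)‖ ^ 2
      = (∑ i, ‖E i j‖ ^ 2) + (‖w j‖ ^ 2 - 2 * ((starRingEnd ℂ) (b j) * (w j)).re) := by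
    intro w j
    have h1 : ∀ i ∈ Finset.univ, ‖E i j - d i * (starRingEnd ℂ) (w j)‖ ^ 2
        = ‖E i j‖ ^ 2 + ‖d i‖ ^ 2 * ‖w j‖ ^ 2
            - 2 * (E i j * (starRingEnd ℂ) (d i) * (w j)).re :=
      fun i _ => entry_sq _ _ _
    rw [Finset.sum_congr rfl h1, Finset.sum_sub_distrib, Finset.sum_add_distrib,
      ← Finset.sum_mul, hd, one_mul, ← Finset.mul_sum]
    have h2 : ∑ i, (E i j * (starRingEnd ℂ) (d i) * (w j)).re
        = ((starRingEnd ℂ) (b j) * (w j)).re := by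
      rw [← Complex.re_sum]
      congr 1
      rw [hb]
      simp only [map_sum, map_mul, Complex.conj_conj, Finset.sum_mul]
    rw [h2]
    ring
  have card_eq : ∀ w : Fin M → ℂ,
      (((Finset.univ.filter (fun j => w j ≠ 0)).card : ℕ) : ℝ)
        = ∑ j, (if w j = 0 then (0:ℝ) else 1) := by
    intro w
    rw [Finset.card_filter]
    push_cast
    apply Finset.sum_congr rfl
    intro j _
    by_cases h : w j = 0 <;> simp [h]
  have key2 : ∀ w : Fin M → ℂ,
      (∑ i, ∑ j, ‖E i j - d i * (starRingEnd ℂ) (w j)‖ ^ 2)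
        + lam ^ 2 * (((Finset.univ.filter (fun j => w j ≠ 0)).card : ℕ) : ℝ)
      = (∑ j, ∑ i, ‖E i j‖ ^ 2)
        + ∑ j, (‖w j‖ ^ 2 - 2 * ((starRingEnd ℂ) (b j) * (w j)).re
            + lam ^ 2 * (if w j = 0 then (0:ℝ) else 1)) := by
    intro w
    rw [Finset.sum_comm, card_eq w, Finset.mul_sum,
      Finset.sum_congr rfl (fun j _ => hcol w j),
      Finset.sum_add_distrib, Finset.sum_add_distrib]
    ring
  rw [hF]
  simp only
  rw [key2 chat, key2 c]
  refine add_le_add le_rfl (Finset.sum_le_sum fun j _ => ?_)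
  exact (key j).2 (c j) (hc j)
end

section
/- Fix E ∈ ℂ^{m×M}, a unit vector d ∈ ℂ^m, and λ > 0. The vector ĉ ∈ ℂ^M defined coordinatewise by ĉ_j = max(|b_j| − λ/2, 0) · e^{i∠b_j}, where b = E^H d, is the unique global minimizer of the function c ↦ ‖E − d c^H‖_F² + λ ‖c‖₁. -/
open Finset


open Finset

noncomputable def g (lam : ℝ) (b z : ℂ) : ℝ :=
  Complex.normSq z - 2 * ((starRingEnd ℂ b) * z).re + lam * ‖z‖

lemma norm_sq_eq (u : ℂ) : ‖u‖ ^ 2 = Complex.normSq u := by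
  rw [← Complex.sq_norm]

lemma scalar_min (lam : ℝ) (hlam : 0 < lam) (b z zh : ℂ)
    (hzh : zh = (max (‖b‖ - lam / 2) 0 : ℝ) * (if b = 0 then 1 else b / (‖b‖ : ℂ))) :
    g lam b zh ≤ g lam b z ∧ (g lam b z = g lam b zh → z = zh) := by
  set t : ℝ := max (‖b‖ - lam / 2) 0 with ht
  have ht0 : 0 ≤ t := le_max_right _ _
  have hnb : 0 ≤ ‖b‖ := norm_nonneg b
  have hcb : (starRingEnd ℂ) b * b = ((‖b‖ ^ 2 : ℝ) : ℂ) := by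
    rw [mul_comm, Complex.mul_conj]
    norm_cast
    rw [norm_sq_eq]
  have hnzh : ‖zh‖ = t := by
    rw [hzh]
    rcases eq_or_ne b 0 with hb0 | hb0
    · simp [hb0, abs_of_nonneg ht0]
    · have h1 : ‖(b / (‖b‖ : ℂ))‖ = 1 := by
        rw [norm_div, Complex.norm_real, norm_norm]
        exact div_self (norm_ne_zero_iff.mpr hb0)
      simp [hb0, norm_mul, h1, Complex.norm_real, abs_of_nonneg ht0]
  have hre : ((starRingEnd ℂ b) * zh).re = t * ‖b‖ := by
    rw [hzh]
    rcases eq_or_ne b 0 with hb0 | hb0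
    · simp [hb0]
    · have hb' : (‖b‖ : ℂ) ≠ 0 := Complex.ofReal_ne_zero.mpr (norm_ne_zero_iff.mpr hb0)
      have h3 : ((‖b‖ ^ 2 : ℝ) : ℂ) / (‖b‖ : ℂ) = (‖b‖ : ℂ) := by
        push_cast
        rw [sq, mul_div_assoc, div_self hb', mul_one]
      have h2 : (starRingEnd ℂ b) * ((t : ℂ) * (b / (‖b‖ : ℂ))) = ((t * ‖b‖ : ℝ) : ℂ) := by
        have h4 : (starRingEnd ℂ b) * ((t : ℂ) * (b / (‖b‖ : ℂ)))
            = (t : ℂ) * (((‖b‖ ^ 2 : ℝ) : ℂ) / (‖b‖ : ℂ)) := by rw [← hcb]; ring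
        rw [h4, h3]; push_cast; ring
      simp only [hb0, if_neg, ite_false]
      rw [h2, Complex.ofReal_re]
  have hnszh : Complex.normSq zh = t ^ 2 := by
    rw [← norm_sq_eq, hnzh]
  have hgzh : g lam b zh = t ^ 2 - 2 * (t * ‖b‖) + lam * t := by
    rw [g, hnszh, hre, hnzh]
  set r : ℝ := ‖z‖ with hr
  have hr0 : 0 ≤ r := norm_nonneg z
  have hnsz : Complex.normSq z = r ^ 2 := by rw [← norm_sq_eq]
  have hCS : ((starRingEnd ℂ b) * z).re ≤ ‖b‖ * r := by
    calc ((starRingEnd ℂ b) * z).re ≤ ‖(starRingEnd ℂ b) * z‖ :=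
          Complex.re_le_norm _
    _ = ‖b‖ * r := by
          rw [norm_mul, Complex.norm_conj]
  have hkey : t ^ 2 - 2 * (t * ‖b‖) + lam * t ≤ r ^ 2 - 2 * (r * ‖b‖) + lam * r := by
    rcases le_or_gt ‖b‖ (lam / 2) with h | h
    · have h0 : t = 0 := by rw [ht, max_eq_right]; linarith
      rw [h0]; nlinarith
    · have h0 : t = ‖b‖ - lam / 2 := by rw [ht, max_eq_left]; linarith
      nlinarith [sq_nonneg (r - t)]
  have hgz : g lam b z = r ^ 2 - 2 * ((starRingEnd ℂ b) * z).re + lam * r := by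
    rw [g, hnsz]
  constructor
  · rw [hgzh, hgz]; linarith
  · intro heq
    rw [hgz, hgzh] at heq
    have hReq : ((starRingEnd ℂ b) * z).re = ‖b‖ * r := by linarith
    have hheq : r ^ 2 - 2 * (r * ‖b‖) + lam * r = t ^ 2 - 2 * (t * ‖b‖) + lam * t := by
      linarith
    rcases le_or_gt ‖b‖ (lam / 2) with h | h
    · have h0 : t = 0 := by rw [ht, max_eq_right]; linarith
      have hr00 : r = 0 := by nlinarith
      have hz0 : z = 0 := norm_eq_zero.mp hr00
      have hzh0 : zh = 0 := norm_eq_zero.mp (by rw [hnzh, h0])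
      rw [hz0, hzh0]
    · have h0 : t = ‖b‖ - lam / 2 := by rw [ht, max_eq_left]; linarith
      have hrt : r = t := by nlinarith
      have hb0 : b ≠ 0 := by
        intro hc; rw [hc, norm_zero] at h; linarith
      have hconjne : (starRingEnd ℂ) b ≠ 0 := by
        simpa using hb0
      have habs : ‖(starRingEnd ℂ) b * z‖ = ‖b‖ * r := by
        rw [norm_mul, Complex.norm_conj]
      have hnsw : Complex.normSq ((starRingEnd ℂ) b * z) = (‖b‖ * r) ^ 2 := by
        rw [← Complex.sq_norm, habs]
      rw [Complex.normSq_apply] at hnsw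
      have hre2 : ((starRingEnd ℂ) b * z).re * ((starRingEnd ℂ) b * z).re
          = (‖b‖ * r) ^ 2 := by rw [hReq]; ring
      have him2 : ((starRingEnd ℂ) b * z).im * ((starRingEnd ℂ) b * z).im = 0 := by
        linarith
      have him : ((starRingEnd ℂ) b * z).im = 0 := mul_self_eq_zero.mp him2
      have hweq : (starRingEnd ℂ) b * z = ((‖b‖ * r : ℝ) : ℂ) :=
        Complex.ext (by simpa using hReq) (by simpa using him)
      have hz : z * (starRingEnd ℂ) b = ((‖b‖ * t : ℝ) : ℂ) := by
        rw [mul_comm, hweq, hrt]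
      have hb' : (‖b‖ : ℂ) ≠ 0 := Complex.ofReal_ne_zero.mpr (norm_ne_zero_iff.mpr hb0)
      have h3 : ((‖b‖ ^ 2 : ℝ) : ℂ) / (‖b‖ : ℂ) = (‖b‖ : ℂ) := by
        push_cast
        rw [sq, mul_div_assoc, div_self hb', mul_one]
      have hzh' : zh * (starRingEnd ℂ) b = ((‖b‖ * t : ℝ) : ℂ) := by
        rw [hzh]
        simp only [hb0, ite_false]
        have h4 : ((t : ℂ) * (b / (‖b‖ : ℂ))) * (starRingEnd ℂ) b
            = (t : ℂ) * (((‖b‖ ^ 2 : ℝ) : ℂ) / (‖b‖ : ℂ)) := by rw [← hcb]; ring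
        rw [h4, h3]; push_cast; ring
      exact mul_right_cancel₀ hconjne (hz.trans hzh'.symm)

lemma term_eq (x y w : ℂ) : ‖x - y * (starRingEnd ℂ) w‖ ^ 2
    = ‖x‖ ^ 2 + Complex.normSq y * Complex.normSq w - 2 * ((x * (starRingEnd ℂ) y) * w).re := by
  rw [norm_sq_eq, norm_sq_eq]
  simp only [Complex.normSq_apply, Complex.sub_re, Complex.sub_im, Complex.mul_re,
    Complex.mul_im, Complex.conj_re, Complex.conj_im]
  ring


/-- soft-thresholding sparse coding update is the unique global minimizer of
the ℓ₁-penalized objective. -/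
theorem stmt2 (m M : ℕ) (E : Matrix (Fin m) (Fin M) ℂ) (d : Fin m → ℂ)
    (hd : ∑ i, ‖d i‖ ^ 2 = 1) (lam : ℝ) (hlam : 0 < lam)
    (b : Fin M → ℂ) (hb : b = fun j => ∑ i, (starRingEnd ℂ) (E i j) * d i)
    (chat : Fin M → ℂ)
    (hchat : chat = fun j =>
      (max (‖b j‖ - lam / 2) 0 : ℝ) * (if b j = 0 then 1 else b j / (‖b j‖ : ℂ)))
    (F : (Fin M → ℂ) → ℝ)
    (hF : F = fun c => (∑ i, ∑ j, ‖E i j - d i * (starRingEnd ℂ) (c j)‖ ^ 2)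
      + lam * ∑ j, ‖c j‖) :
    ∀ c : Fin M → ℂ, F chat ≤ F c ∧ (F c = F chat → c = chat) := by
  have hd' : ∑ i, Complex.normSq (d i) = 1 := by
    rw [← hd]; exact Finset.sum_congr rfl fun i _ => (norm_sq_eq (d i)).symm
  -- decomposition of F
  have hdec : ∀ c : Fin M → ℂ,
      F c = (∑ j, ∑ i, ‖E i j‖ ^ 2) + ∑ j, g lam (b j) (c j) := by
    intro c
    rw [hF]
    simp only
    rw [Finset.sum_comm]
    have hrow : ∀ j, ∑ i, ‖E i j - d i * (starRingEnd ℂ) (c j)‖ ^ 2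
        = (∑ i, ‖E i j‖ ^ 2) + g lam (b j) (c j) - lam * ‖c j‖ := by
      intro j
      have h1 : ∀ i, ‖E i j - d i * (starRingEnd ℂ) (c j)‖ ^ 2
          = ‖E i j‖ ^ 2 + Complex.normSq (d i) * Complex.normSq (c j)
            - 2 * ((E i j * (starRingEnd ℂ) (d i)) * c j).re := fun i => term_eq _ _ _
      have h2 : (∑ i, E i j * (starRingEnd ℂ) (d i)) = (starRingEnd ℂ) (b j) := by
        rw [hb]
        simp only [map_sum, map_mul, Complex.conj_conj]
      rw [Finset.sum_congr rfl fun i _ => h1 i, Finset.sum_sub_distrib,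
        Finset.sum_add_distrib, ← Finset.sum_mul, hd', one_mul]
      have h4 : ∑ x, 2 * ((E x j * (starRingEnd ℂ) (d x)) * c j).re
          = 2 * ((starRingEnd ℂ) (b j) * c j).re := by
        rw [← Finset.mul_sum, ← Complex.re_sum, ← Finset.sum_mul, h2]
      rw [h4, g]
      ring
    rw [Finset.sum_congr rfl fun j _ => hrow j]
    rw [Finset.sum_sub_distrib, Finset.sum_add_distrib, ← Finset.mul_sum]
    ring
  intro c
  have hsc : ∀ j, g lam (b j) (chat j) ≤ g lam (b j) (c j)
      ∧ (g lam (b j) (c j) = g lam (b j) (chat j) → c j = chat j) := by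
    intro j
    exact scalar_min lam hlam (b j) (c j) (chat j) (by rw [hchat])
  constructor
  · rw [hdec, hdec]
    exact add_le_add_right (Finset.sum_le_sum fun j _ => (hsc j).1) _
  · intro heq
    rw [hdec, hdec] at heq
    have hsum : ∑ j, g lam (b j) (chat j) = ∑ j, g lam (b j) (c j) := by linarith
    have := (Finset.sum_eq_sum_iff_of_le (fun j _ => (hsc j).1)).mp hsum
    funext j
    exact (hsc j).2 ((this j (Finset.mem_univ j)).symm)
end

section
/- Let Y ∈ ℂ^{p×q} have singular value decomposition Y = U Σ V^H with singular values σ₁ ≥ ... ≥ σ_min(p,q), and let r ≥ 1 with E c ≠ 0 playing the role of Y. Then the matrix D̂ = (U_r Σ_r V_r^H)/‖Σ_r‖_F, where U_r Σ_r V_r^H is the truncated rank-r SVD of Y, maximizes Re(tr(D^H Y)) over all D ∈ ℂ^{p×q} with rank(D) ≤ r and ‖D‖_F = 1, and the maximal value is √(σ₁² + ... + σ_r²). -/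
open Finset
open scoped InnerProductSpace ComplexConjugate

section helpers
private lemma swap3 {α β γ M : Type*} [AddCommMonoid M] (A : Finset α) (B : Finset β)
    (F : Finset γ) (f : α → β → γ → M) :
    ∑ a ∈ A, ∑ b ∈ B, ∑ i ∈ F, f a b i = ∑ i ∈ F, ∑ a ∈ A, ∑ b ∈ B, f a b i :=
  calc ∑ a ∈ A, ∑ b ∈ B, ∑ i ∈ F, f a b i
      = ∑ a ∈ A, ∑ i ∈ F, ∑ b ∈ B, f a b i :=
        Finset.sum_congr rfl fun _ _ => Finset.sum_comm
    _ = ∑ i ∈ F, ∑ a ∈ A, ∑ b ∈ B, f a b i := Finset.sum_comm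

private lemma swap4 {α β γ δ M : Type*} [AddCommMonoid M] (A : Finset α) (B : Finset β)
    (F : Finset γ) (G : Finset δ) (f : α → β → γ → δ → M) :
    ∑ a ∈ A, ∑ b ∈ B, ∑ i ∈ F, ∑ j ∈ G, f a b i j
      = ∑ i ∈ F, ∑ j ∈ G, ∑ a ∈ A, ∑ b ∈ B, f a b i j := by
  rw [swap3 A B F]
  exact Finset.sum_congr rfl fun i _ => swap3 A B G _

private lemma aux_prod {n p q : ℕ} (u : Fin n → Fin p → ℂ) (v : Fin n → Fin q → ℂ)
    (hu : ∀ i i', ∑ a, (starRingEnd ℂ) (u i a) * u i' a = if i = i' then 1 else 0)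
    (hv : ∀ i i', ∑ b, (starRingEnd ℂ) (v i b) * v i' b = if i = i' then 1 else 0)
    (F G : Finset (Fin n)) (τ τ' : Fin n → ℂ) :
    ∑ a, ∑ b, (starRingEnd ℂ) (∑ i ∈ F, τ i * u i a * (starRingEnd ℂ) (v i b)) *
      (∑ i' ∈ G, τ' i' * u i' a * (starRingEnd ℂ) (v i' b))
      = ∑ i ∈ F ∩ G, (starRingEnd ℂ) (τ i) * τ' i := by
  classical
  calc ∑ a, ∑ b, (starRingEnd ℂ) (∑ i ∈ F, τ i * u i a * (starRingEnd ℂ) (v i b)) *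
      (∑ i' ∈ G, τ' i' * u i' a * (starRingEnd ℂ) (v i' b))
      = ∑ a, ∑ b, ∑ i ∈ F, ∑ i' ∈ G, ((starRingEnd ℂ) (τ i) * τ' i') *
          (((starRingEnd ℂ) (u i a) * u i' a) * (v i b * (starRingEnd ℂ) (v i' b))) := by
        refine Finset.sum_congr rfl fun a _ => Finset.sum_congr rfl fun b _ => ?_
        rw [map_sum, Finset.sum_mul_sum]
        refine Finset.sum_congr rfl fun i _ => Finset.sum_congr rfl fun i' _ => ?_
        simp only [map_mul, Complex.conj_conj]
        ring
    _ = ∑ i ∈ F, ∑ i' ∈ G, ((starRingEnd ℂ) (τ i) * τ' i') *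
          ((∑ a, (starRingEnd ℂ) (u i a) * u i' a) * (∑ b, v i b * (starRingEnd ℂ) (v i' b))) := by
        rw [swap4]
        refine Finset.sum_congr rfl fun i _ => Finset.sum_congr rfl fun i' _ => ?_
        rw [Finset.sum_mul_sum, Finset.mul_sum]
        exact Finset.sum_congr rfl fun a _ => by rw [Finset.mul_sum]
    _ = ∑ i ∈ F, ∑ i' ∈ G, ((starRingEnd ℂ) (τ i) * τ' i') *
          ((if i = i' then 1 else 0) * (if i' = i then (1:ℂ) else 0)) := by
        refine Finset.sum_congr rfl fun i _ => Finset.sum_congr rfl fun i' _ => ?_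
        rw [hu i i']
        have hb : ∑ b, v i b * (starRingEnd ℂ) (v i' b) = if i' = i then 1 else 0 := by
          rw [← hv i' i]
          exact Finset.sum_congr rfl fun b _ => mul_comm _ _
        rw [hb]
    _ = ∑ i ∈ F ∩ G, (starRingEnd ℂ) (τ i) * τ' i := by
        have hterm : ∀ i i' : Fin n, ((starRingEnd ℂ) (τ i) * τ' i') *
            ((if i = i' then 1 else 0) * (if i' = i then (1:ℂ) else 0))
            = if i' = i then (starRingEnd ℂ) (τ i) * τ' i' else 0 := by
          intro i i'
          by_cases h : i' = i
          · simp [h]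
          · have h2 : ¬ i = i' := fun hh => h hh.symm
            simp [h, h2]
        simp only [hterm]
        rw [Finset.sum_congr rfl fun i (_ : i ∈ F) => Finset.sum_ite_eq' G i
          (fun i' => (starRingEnd ℂ) (τ i) * τ' i')]
        rw [← Finset.sum_filter, Finset.filter_mem_eq_inter]

private lemma filter_eq_image {n r : ℕ} (hr : r ≤ n) :
    Finset.univ.filter (fun i : Fin n => (i : ℕ) < r)
      = Finset.image (Fin.castLE hr) Finset.univ := by
  ext i
  simp only [Finset.mem_filter, Finset.mem_univ, true_and, Finset.mem_image]
  constructor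
  · intro h
    exact ⟨⟨(i : ℕ), h⟩, Fin.ext rfl⟩
  · rintro ⟨j, rfl⟩
    simpa using j.isLt

private lemma card_filter_lt {n r : ℕ} (hr : r ≤ n) :
    (Finset.univ.filter (fun i : Fin n => (i : ℕ) < r)).card = r := by
  rw [filter_eq_image hr, Finset.card_image_of_injective _ (Fin.castLE_injective hr),
    Finset.card_univ, Fintype.card_fin]

private lemma sum_filter_lt {n r : ℕ} (hr : r ≤ n) {M : Type*} [AddCommMonoid M] (f : Fin n → M) :
    ∑ i ∈ Finset.univ.filter (fun i : Fin n => (i : ℕ) < r), f i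
      = ∑ j : Fin r, f (Fin.castLE hr j) := by
  rw [filter_eq_image hr, Finset.sum_image (fun a _ b _ h => Fin.castLE_injective hr h)]

private lemma cs_complex {k : ℕ} (f g : Fin k → ℂ) :
    ‖∑ j, f j * g j‖ ≤ Real.sqrt (∑ j, ‖f j‖ ^ 2) * Real.sqrt (∑ j, ‖g j‖ ^ 2) := by
  set x : EuclideanSpace ℂ (Fin k) := (WithLp.equiv 2 (Fin k → ℂ)).symm (fun j => conj (f j)) with hxdef
  set y : EuclideanSpace ℂ (Fin k) := (WithLp.equiv 2 (Fin k → ℂ)).symm g with hydef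
  have h1 : ⟪x, y⟫_ℂ = ∑ j, f j * g j := by
    simp [hxdef, hydef, PiLp.inner_apply, RCLike.inner_apply]
    exact Finset.sum_congr rfl fun j _ => mul_comm _ _
  have h2 := norm_inner_le_norm (𝕜 := ℂ) x y
  rw [h1] at h2
  have hx : ‖x‖ = Real.sqrt (∑ j, ‖f j‖ ^ 2) := by
    rw [EuclideanSpace.norm_eq]
    congr 1
    exact Finset.sum_congr rfl fun j _ => by
      simp [hxdef]
  have hy : ‖y‖ = Real.sqrt (∑ j, ‖g j‖ ^ 2) := by
    rw [EuclideanSpace.norm_eq]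
    rfl
  rw [hx, hy] at h2
  exact h2

private lemma orth_family {n m : ℕ} (u : Fin n → Fin m → ℂ)
    (hu : ∀ i i', ∑ a, (starRingEnd ℂ) (u i a) * u i' a = if i = i' then 1 else 0) :
    Orthonormal ℂ (fun i => (WithLp.equiv 2 (Fin m → ℂ)).symm (u i)) := by
  rw [orthonormal_iff_ite]
  intro i j
  simpa [PiLp.inner_apply, RCLike.inner_apply, mul_comm] using hu i j

private lemma tlemma {n r : ℕ} (hr : r ≤ n) (f t : Fin n → ℝ) (hf0 : ∀ i, 0 ≤ f i)
    (hfd : ∀ i j : Fin n, i ≤ j → f j ≤ f i) (ht0 : ∀ i, 0 ≤ t i) (ht1 : ∀ i, t i ≤ 1)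
    (hts : ∑ i, t i ≤ (r : ℝ)) :
    ∑ i, f i * t i ≤ ∑ i ∈ Finset.univ.filter (fun i : Fin n => (i : ℕ) < r), f i := by
  classical
  by_cases h : r < n
  · set c := f ⟨r, h⟩ with hc
    have hc0 : 0 ≤ c := hf0 _
    have key : ∀ i : Fin n, f i * t i ≤ (if (i : ℕ) < r then f i - c else 0) + c * t i := by
      intro i
      by_cases hi : (i : ℕ) < r
      · simp only [hi, if_pos]
        have hcf : c ≤ f i := hfd i ⟨r, h⟩ (by simp [Fin.le_def]; omega)
        nlinarith [ht0 i, ht1 i]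
      · simp only [hi, if_neg, not_false_iff, zero_add]
        have hcf : f i ≤ c := hfd ⟨r, h⟩ i (by simp [Fin.le_def]; omega)
        nlinarith [ht0 i]
    calc ∑ i, f i * t i ≤ ∑ i : Fin n, ((if (i : ℕ) < r then f i - c else 0) + c * t i) :=
          Finset.sum_le_sum fun i _ => key i
      _ = (∑ i ∈ Finset.univ.filter (fun i : Fin n => (i : ℕ) < r), (f i - c)) + c * ∑ i, t i := by
          rw [Finset.sum_add_distrib, ← Finset.sum_filter, ← Finset.mul_sum]
      _ ≤ ∑ i ∈ Finset.univ.filter (fun i : Fin n => (i : ℕ) < r), f i := by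
          rw [Finset.sum_sub_distrib, Finset.sum_const, card_filter_lt (le_of_lt h)]
          have : c * ∑ i, t i ≤ c * r := mul_le_mul_of_nonneg_left hts hc0
          simp only [nsmul_eq_mul]
          linarith
  · have hfilter : Finset.univ.filter (fun i : Fin n => (i : ℕ) < r) = Finset.univ := by
      apply Finset.filter_true_of_mem
      intro i _
      omega
    rw [hfilter]
    refine Finset.sum_le_sum fun i _ => ?_
    have := ht1 i
    nlinarith [hf0 i, ht0 i]

end helpers

/-- the normalized truncated rank-r SVD maximizes Re(tr(Dᴴ Y)) over matrices D
with rank at most r and unit Frobenius norm, with maximal value √(σ₁²+...+σ_r²). -/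
theorem stmt6 (p q r : ℕ) (hr1 : 1 ≤ r) (hr : r ≤ min p q)
    (u : Fin (min p q) → Fin p → ℂ) (v : Fin (min p q) → Fin q → ℂ)
    (hu : ∀ i i', ∑ a, (starRingEnd ℂ) (u i a) * u i' a = if i = i' then 1 else 0)
    (hv : ∀ i i', ∑ b, (starRingEnd ℂ) (v i b) * v i' b = if i = i' then 1 else 0)
    (σ : Fin (min p q) → ℝ) (hdec : ∀ i j, i ≤ j → σ j ≤ σ i) (hnn : ∀ i, 0 ≤ σ i)
    (Y : Matrix (Fin p) (Fin q) ℂ)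
    (hY : Y = fun a b => ∑ i, (σ i : ℂ) * u i a * (starRingEnd ℂ) (v i b))
    (hYne : Y ≠ 0)
    (s : ℝ)
    (hs : s = Real.sqrt (∑ i ∈ Finset.univ.filter (fun i : Fin (min p q) => (i : ℕ) < r), σ i ^ 2))
    (Dhat : Matrix (Fin p) (Fin q) ℂ)
    (hDhat : Dhat = fun a b =>
      (∑ i ∈ Finset.univ.filter (fun i : Fin (min p q) => (i : ℕ) < r),
        (σ i : ℂ) * u i a * (starRingEnd ℂ) (v i b)) / (s : ℂ)) :
    Dhat.rank ≤ r ∧ (∑ a, ∑ b, ‖Dhat a b‖ ^ 2 = 1) ∧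
      (∑ a, ∑ b, (starRingEnd ℂ) (Dhat a b) * Y a b).re = s ∧
      ∀ D : Matrix (Fin p) (Fin q) ℂ, D.rank ≤ r → (∑ a, ∑ b, ‖D a b‖ ^ 2 = 1) →
        (∑ a, ∑ b, (starRingEnd ℂ) (D a b) * Y a b).re ≤ s := by
  classical
  set F : Finset (Fin (min p q)) :=
    Finset.univ.filter (fun i : Fin (min p q) => (i : ℕ) < r) with hFdef
  set T : ℝ := ∑ i ∈ F, σ i ^ 2 with hTdef
  -- basic facts
  have hnormsq : ∀ z : ℂ, ((starRingEnd ℂ) z * z).re = ‖z‖ ^ 2 := by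
    intro z
    rw [mul_comm, Complex.mul_conj, Complex.ofReal_re, Complex.normSq_eq_norm_sq]
  have hn0 : 0 < min p q := lt_of_lt_of_le hr1 hr
  have hT0 : 0 < T := by
    have hex : ∃ i, σ i ≠ 0 := by
      by_contra h
      push_neg at h
      apply hYne
      rw [hY]
      refine Matrix.ext fun a b => ?_
      simp [h]
    obtain ⟨i0, hi0⟩ := hex
    have hz : (⟨0, hn0⟩ : Fin (min p q)) ∈ F := by
      simp [hFdef]
      omega
    have hσz : 0 < σ ⟨0, hn0⟩ := by
      have h1 : 0 < σ i0 := lt_of_le_of_ne (hnn i0) (Ne.symm hi0)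
      have h2 : σ i0 ≤ σ ⟨0, hn0⟩ := hdec _ i0 (by simp [Fin.le_def])
      linarith
    have h3 := Finset.single_le_sum (f := fun i => σ i ^ 2) (fun i _ => sq_nonneg _) hz
    have h4 : σ ⟨0, hn0⟩ ^ 2 ≤ T := by simpa [hTdef] using h3
    nlinarith
  have hspos : 0 < s := by rw [hs]; exact Real.sqrt_pos.mpr hT0
  have hs2 : s * s = T := by
    rw [hs, ← Real.sqrt_mul_self hT0.le]
    rw [Real.sqrt_mul_self hT0.le, Real.mul_self_sqrt hT0.le]
  -- numerator
  set num : Fin p → Fin q → ℂ :=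
    fun a b => ∑ i ∈ F, (σ i : ℂ) * u i a * (starRingEnd ℂ) (v i b) with hnum
  have hDnum : ∀ a b, Dhat a b = num a b / (s : ℂ) := by
    intro a b; rw [hDhat]
  -- key computations from aux_prod
  have key2 : ∑ a, ∑ b, (starRingEnd ℂ) (num a b) * num a b = ((T : ℝ) : ℂ) := by
    rw [hnum]
    rw [aux_prod u v hu hv F F (fun i => (σ i : ℂ)) (fun i => (σ i : ℂ))]
    rw [Finset.inter_self]
    rw [hTdef]
    push_cast
    refine Finset.sum_congr rfl fun i _ => ?_
    rw [Complex.conj_ofReal]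
    ring
  have key3 : ∑ a, ∑ b, (starRingEnd ℂ) (num a b) * Y a b = ((T : ℝ) : ℂ) := by
    rw [hnum, hY]
    have := aux_prod u v hu hv F Finset.univ (fun i => (σ i : ℂ)) (fun i => (σ i : ℂ))
    rw [this, Finset.inter_univ, hTdef]
    push_cast
    refine Finset.sum_congr rfl fun i _ => ?_
    rw [Complex.conj_ofReal]
    ring
  -- Part 1 : rank
  have part1 : Dhat.rank ≤ r := by
    have hfac : Dhat = (Matrix.of fun a j => ((σ (Fin.castLE hr j) : ℂ) / s) * u (Fin.castLE hr j) a) *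
        (Matrix.of fun j b => (starRingEnd ℂ) (v (Fin.castLE hr j) b)) := by
      refine Matrix.ext fun a b => ?_
      rw [hDnum]
      simp only [hnum, hFdef]
      rw [sum_filter_lt hr (f := fun i => (σ i : ℂ) * u i a * (starRingEnd ℂ) (v i b)),
        Finset.sum_div, Matrix.mul_apply]
      exact Finset.sum_congr rfl fun j _ => by simp only [Matrix.of_apply]; ring
    rw [hfac]
    refine le_trans (Matrix.rank_mul_le_left _ _) (le_trans (Matrix.rank_le_card_width _) ?_)
    simp
  -- Part 2 : norm
  have part2 : ∑ a, ∑ b, ‖Dhat a b‖ ^ 2 = 1 := by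
    have hcsum : ∑ a, ∑ b, (starRingEnd ℂ) (Dhat a b) * Dhat a b = 1 := by
      have h1 : ∀ a b, (starRingEnd ℂ) (Dhat a b) * Dhat a b
          = ((starRingEnd ℂ) (num a b) * num a b) / ((s : ℂ) * (s : ℂ)) := by
        intro a b
        rw [hDnum, map_div₀, Complex.conj_ofReal, div_mul_div_comm]
      simp_rw [h1]
      simp_rw [← Finset.sum_div]
      rw [key2]
      rw [← Complex.ofReal_mul, hs2]
      exact div_self (by exact_mod_cast hT0.ne')
    calc ∑ a, ∑ b, ‖Dhat a b‖ ^ 2 = ∑ a, ∑ b, ((starRingEnd ℂ) (Dhat a b) * Dhat a b).re := by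
          exact Finset.sum_congr rfl fun a _ => Finset.sum_congr rfl fun b _ => (hnormsq _).symm
      _ = (∑ a, ∑ b, (starRingEnd ℂ) (Dhat a b) * Dhat a b).re := by
          rw [Complex.re_sum]
          exact Finset.sum_congr rfl fun a _ => (Complex.re_sum _ _).symm
      _ = 1 := by rw [hcsum]; simp
  -- Part 3 : value
  have part3 : (∑ a, ∑ b, (starRingEnd ℂ) (Dhat a b) * Y a b).re = s := by
    have hcsum : ∑ a, ∑ b, (starRingEnd ℂ) (Dhat a b) * Y a b = ((T / s : ℝ) : ℂ) := by
      have h1 : ∀ a b, (starRingEnd ℂ) (Dhat a b) * Y a b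
          = ((starRingEnd ℂ) (num a b) * Y a b) / (s : ℂ) := by
        intro a b
        rw [hDnum, map_div₀, Complex.conj_ofReal, div_mul_eq_mul_div]
      simp_rw [h1]
      simp_rw [← Finset.sum_div]
      rw [key3]
      push_cast
      ring
    rw [hcsum]
    rw [Complex.ofReal_re]
    rw [← hs2]
    field_simp
  refine ⟨part1, part2, part3, ?_⟩
  intro D hDrank hDnorm
  -- Euclidean space machinery
  have hUo : Orthonormal ℂ (fun i => (WithLp.equiv 2 (Fin p → ℂ)).symm (u i)) := orth_family u hu
  have hVo : Orthonormal ℂ (fun i => (WithLp.equiv 2 (Fin q → ℂ)).symm (v i)) := orth_family v hv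
  set U : Fin (min p q) → EuclideanSpace ℂ (Fin p) :=
    fun i => (WithLp.equiv 2 (Fin p → ℂ)).symm (u i) with hUdef
  set V : Fin (min p q) → EuclideanSpace ℂ (Fin q) :=
    fun i => (WithLp.equiv 2 (Fin q → ℂ)).symm (v i) with hVdef
  have hinnerp : ∀ (x y : EuclideanSpace ℂ (Fin p)),
      ⟪x, y⟫_ℂ = ∑ a, (starRingEnd ℂ) (x a) * y a := by
    intro x y
    simp [PiLp.inner_apply, RCLike.inner_apply, mul_comm]
  have hinnerq : ∀ (x y : EuclideanSpace ℂ (Fin q)),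
      ⟪x, y⟫_ℂ = ∑ b, (starRingEnd ℂ) (x b) * y b := by
    intro x y
    simp [PiLp.inner_apply, RCLike.inner_apply, mul_comm]
  -- the column span of D
  set col : Fin q → EuclideanSpace ℂ (Fin p) :=
    fun b => (WithLp.equiv 2 (Fin p → ℂ)).symm (fun a => D a b) with hcoldef
  set S : Submodule ℂ (EuclideanSpace ℂ (Fin p)) := Submodule.span ℂ (Set.range col) with hSdef
  have hcol : ∀ b, col b ∈ S := fun b => Submodule.subset_span ⟨b, rfl⟩
  have hSfin : Module.finrank ℂ S ≤ r := by
    have hmap : S = Submodule.map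
        ((WithLp.linearEquiv 2 ℂ (Fin p → ℂ)).symm.toLinearMap)
        (Submodule.span ℂ (Set.range D.transpose)) := by
      rw [Submodule.map_span]
      congr 1
      exact congrArg (Submodule.span ℂ) (Set.range_comp _ _)
    calc Module.finrank ℂ S
        = Module.finrank ℂ (Submodule.span ℂ (Set.range D.transpose)) := by
          rw [hmap]; exact LinearEquiv.finrank_map_eq _ _
      _ = D.rank := (Matrix.rank_eq_finrank_span_cols D).symm
      _ ≤ r := hDrank
  set k := Module.finrank ℂ S with hkdef
  set w : OrthonormalBasis (Fin k) ℂ S := stdOrthonormalBasis ℂ S with hwdef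
  set W : Fin k → EuclideanSpace ℂ (Fin p) := fun j => (w j : EuclideanSpace ℂ (Fin p)) with hWdef
  have hWo : Orthonormal ℂ W := w.orthonormal.comp_linearIsometry S.subtypeₗᵢ
  set X : Fin k → Fin q → ℂ := fun j b => ∑ a, (starRingEnd ℂ) (W j a) * D a b with hXdef
  have hXinner : ∀ j b, ⟪W j, col b⟫_ℂ = X j b := by
    intro j b
    rw [hinnerp]
    rfl
  -- factorization of D through the orthonormal family W
  have hfactD : ∀ a b, D a b = ∑ j, X j b * W j a := by
    intro a b
    have h1 := w.sum_repr' (⟨col b, hcol b⟩ : S)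
    have h2 : ∑ j, ⟪W j, col b⟫_ℂ • W j = col b := by
      have h3 := congrArg (Submodule.subtype S) h1
      rw [map_sum] at h3
      simpa [hWdef, Submodule.coe_inner] using h3
    have h3 := congrArg (WithLp.linearEquiv 2 ℂ (Fin p → ℂ)).toLinearMap h2
    rw [map_sum] at h3
    have h4 := congrFun h3 a
    simp only [LinearMap.map_smul] at h4
    rw [Finset.sum_apply] at h4
    simp only [Pi.smul_apply, smul_eq_mul] at h4
    have h5 : (WithLp.linearEquiv 2 ℂ (Fin p → ℂ)).toLinearMap (col b) a = D a b := rfl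
    rw [h5] at h4
    rw [← h4]
    refine Finset.sum_congr rfl fun j _ => ?_
    rw [hXinner]
    rfl
  -- the coefficients
  set α : Fin (min p q) → Fin k → ℂ := fun i j => ∑ a, (starRingEnd ℂ) (W j a) * u i a with hαdef
  set δ : Fin (min p q) → Fin k → ℂ :=
    fun i j => ∑ b, (starRingEnd ℂ) (X j b) * (starRingEnd ℂ) (v i b) with hδdef
  set A : Fin (min p q) → ℝ := fun i => ∑ j, ‖α i j‖ ^ 2 with hAdef
  set B : Fin (min p q) → ℝ := fun i => ∑ j, ‖δ i j‖ ^ 2 with hBdef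
  have hA0 : ∀ i, 0 ≤ A i := fun i => Finset.sum_nonneg fun j _ => sq_nonneg _
  have hB0 : ∀ i, 0 ≤ B i := fun i => Finset.sum_nonneg fun j _ => sq_nonneg _
  have hαU : ∀ i j, ⟪W j, U i⟫_ℂ = α i j := by
    intro i j
    rw [hinnerp]
    rfl
  -- c i and the trace identity
  set c : Fin (min p q) → ℂ :=
    fun i => ∑ a, ∑ b, (starRingEnd ℂ) (D a b) * u i a * (starRingEnd ℂ) (v i b) with hcdef
  have htr : ∑ a, ∑ b, (starRingEnd ℂ) (D a b) * Y a b = ∑ i, (σ i : ℂ) * c i := by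
    rw [hY]
    calc ∑ a, ∑ b, (starRingEnd ℂ) (D a b) *
          (∑ i, (σ i : ℂ) * u i a * (starRingEnd ℂ) (v i b))
        = ∑ a, ∑ b, ∑ i, (σ i : ℂ) *
            ((starRingEnd ℂ) (D a b) * u i a * (starRingEnd ℂ) (v i b)) := by
          refine Finset.sum_congr rfl fun a _ => Finset.sum_congr rfl fun b _ => ?_
          rw [Finset.mul_sum]
          exact Finset.sum_congr rfl fun i _ => by ring
      _ = ∑ i, ∑ a, ∑ b, (σ i : ℂ) *
            ((starRingEnd ℂ) (D a b) * u i a * (starRingEnd ℂ) (v i b)) := swap3 _ _ _ _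
      _ = ∑ i, (σ i : ℂ) * c i := by
          refine Finset.sum_congr rfl fun i _ => ?_
          simp only [hcdef]
          rw [Finset.mul_sum]
          exact Finset.sum_congr rfl fun a _ => by rw [Finset.mul_sum]
  -- c i in terms of α and δ
  have hcix : ∀ i, c i = ∑ j, α i j * δ i j := by
    intro i
    simp only [hcdef]
    calc ∑ a, ∑ b, (starRingEnd ℂ) (D a b) * u i a * (starRingEnd ℂ) (v i b)
        = ∑ a, ∑ b, ∑ j, ((starRingEnd ℂ) (W j a) * u i a) *
            ((starRingEnd ℂ) (X j b) * (starRingEnd ℂ) (v i b)) := by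
          refine Finset.sum_congr rfl fun a _ => Finset.sum_congr rfl fun b _ => ?_
          rw [hfactD a b, map_sum, Finset.sum_mul, Finset.sum_mul]
          refine Finset.sum_congr rfl fun j _ => ?_
          rw [map_mul]
          ring
      _ = ∑ j, ∑ a, ∑ b, ((starRingEnd ℂ) (W j a) * u i a) *
            ((starRingEnd ℂ) (X j b) * (starRingEnd ℂ) (v i b)) := swap3 _ _ _ _
      _ = ∑ j, α i j * δ i j := by
          refine Finset.sum_congr rfl fun j _ => ?_
          simp only [hαdef, hδdef]
          rw [Finset.sum_mul_sum]
  have hnormc : ∀ i, ‖c i‖ ≤ Real.sqrt (A i) * Real.sqrt (B i) := by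
    intro i
    rw [hcix i]
    simpa [hAdef, hBdef] using cs_complex (α i) (δ i)
  -- Bessel bounds
  have hA1 : ∀ i, A i ≤ 1 := by
    intro i
    have h := hWo.sum_inner_products_le (s := Finset.univ) (U i)
    have hU1 : ‖U i‖ = 1 := hUo.1 i
    rw [hU1, one_pow] at h
    calc A i = ∑ j, ‖⟪W j, U i⟫_ℂ‖ ^ 2 := by
          simp only [hAdef]
          exact Finset.sum_congr rfl fun j _ => by rw [hαU]
      _ ≤ 1 := h
  have hAk : ∑ i, A i ≤ (k : ℝ) := by
    calc ∑ i, A i = ∑ j, ∑ i, ‖⟪U i, W j⟫_ℂ‖ ^ 2 := by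
          simp only [hAdef]
          rw [Finset.sum_comm]
          refine Finset.sum_congr rfl fun j _ => Finset.sum_congr rfl fun i _ => ?_
          rw [← norm_inner_symm, hαU]
      _ ≤ ∑ _j : Fin k, (1 : ℝ) := by
          refine Finset.sum_le_sum fun j _ => ?_
          have h := hUo.sum_inner_products_le (s := Finset.univ) (W j)
          rwa [hWo.1 j, one_pow] at h
      _ = (k : ℝ) := by simp
  have hXbound : ∑ j, ∑ b, ‖X j b‖ ^ 2 ≤ 1 := by
    have h1 : ∀ b, ∑ j, ‖X j b‖ ^ 2 ≤ ∑ a, ‖D a b‖ ^ 2 := by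
      intro b
      have h := hWo.sum_inner_products_le (s := Finset.univ) (col b)
      have hnb : ‖col b‖ ^ 2 = ∑ a, ‖D a b‖ ^ 2 := by
        rw [EuclideanSpace.norm_eq, Real.sq_sqrt (Finset.sum_nonneg fun a _ => sq_nonneg _)]
        rfl
      rw [hnb] at h
      calc ∑ j, ‖X j b‖ ^ 2 = ∑ j, ‖⟪W j, col b⟫_ℂ‖ ^ 2 :=
            Finset.sum_congr rfl fun j _ => by rw [hXinner]
        _ ≤ ∑ a, ‖D a b‖ ^ 2 := h
    calc ∑ j, ∑ b, ‖X j b‖ ^ 2 = ∑ b, ∑ j, ‖X j b‖ ^ 2 := Finset.sum_comm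
      _ ≤ ∑ b, ∑ a, ‖D a b‖ ^ 2 := Finset.sum_le_sum fun b _ => h1 b
      _ = ∑ a, ∑ b, ‖D a b‖ ^ 2 := Finset.sum_comm
      _ = 1 := hDnorm
  have hB1 : ∑ i, B i ≤ 1 := by
    have h1 : ∀ j, ∑ i, ‖δ i j‖ ^ 2 ≤ ∑ b, ‖X j b‖ ^ 2 := by
      intro j
      set Z : EuclideanSpace ℂ (Fin q) :=
        (WithLp.equiv 2 (Fin q → ℂ)).symm (fun b => (starRingEnd ℂ) (X j b)) with hZdef
      have hδZ : ∀ i, ⟪V i, Z⟫_ℂ = δ i j := by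
        intro i
        rw [hinnerq]
        simp only [hδdef]
        refine Finset.sum_congr rfl fun b _ => ?_
        have h2 : (V i) b = v i b := rfl
        have h3 : Z b = (starRingEnd ℂ) (X j b) := rfl
        rw [h2, h3]
        ring
      have h := hVo.sum_inner_products_le (s := Finset.univ) Z
      have hZn : ‖Z‖ ^ 2 = ∑ b, ‖X j b‖ ^ 2 := by
        rw [EuclideanSpace.norm_eq, Real.sq_sqrt (Finset.sum_nonneg fun b _ => sq_nonneg _)]
        refine Finset.sum_congr rfl fun b _ => ?_
        have h3 : Z b = (starRingEnd ℂ) (X j b) := rfl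
        rw [h3]
        simp
      rw [hZn] at h
      calc ∑ i, ‖δ i j‖ ^ 2 = ∑ i, ‖⟪V i, Z⟫_ℂ‖ ^ 2 :=
            Finset.sum_congr rfl fun i _ => by rw [hδZ]
        _ ≤ ∑ b, ‖X j b‖ ^ 2 := h
    calc ∑ i, B i = ∑ j, ∑ i, ‖δ i j‖ ^ 2 := by
          simp only [hBdef]
          exact Finset.sum_comm
      _ ≤ ∑ j, ∑ b, ‖X j b‖ ^ 2 := Finset.sum_le_sum fun j _ => h1 j
      _ ≤ 1 := hXbound
  -- the numerical endgame
  have himp : (∑ a, ∑ b, (starRingEnd ℂ) (D a b) * Y a b).re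
      ≤ ∑ i, σ i * (Real.sqrt (A i) * Real.sqrt (B i)) := by
    rw [htr, Complex.re_sum]
    refine Finset.sum_le_sum fun i _ => ?_
    have h1 : ((σ i : ℂ) * c i).re = σ i * (c i).re := by
      rw [Complex.mul_re]
      simp
    rw [h1]
    have h2 : (c i).re ≤ ‖c i‖ := by
      calc (c i).re ≤ |(c i).re| := le_abs_self _
        _ ≤ ‖c i‖ := Complex.abs_re_le_norm (c i)
    exact mul_le_mul_of_nonneg_left (le_trans h2 (hnormc i)) (hnn i)
  have hcs : ∑ i, σ i * (Real.sqrt (A i) * Real.sqrt (B i))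
      ≤ Real.sqrt (∑ i, σ i ^ 2 * A i) * Real.sqrt (∑ i, B i) := by
    have h := Finset.sum_mul_sq_le_sq_mul_sq Finset.univ
      (fun i => σ i * Real.sqrt (A i)) (fun i => Real.sqrt (B i))
    have e1 : ∑ i, (σ i * Real.sqrt (A i)) * Real.sqrt (B i)
        = ∑ i, σ i * (Real.sqrt (A i) * Real.sqrt (B i)) :=
      Finset.sum_congr rfl fun i _ => by ring
    have e2 : ∑ i, (σ i * Real.sqrt (A i)) ^ 2 = ∑ i, σ i ^ 2 * A i :=
      Finset.sum_congr rfl fun i _ => by rw [mul_pow, Real.sq_sqrt (hA0 i)]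
    have e3 : ∑ i, (Real.sqrt (B i)) ^ 2 = ∑ i, B i :=
      Finset.sum_congr rfl fun i _ => Real.sq_sqrt (hB0 i)
    rw [e1, e2, e3] at h
    have hP0 : 0 ≤ ∑ i, σ i * (Real.sqrt (A i) * Real.sqrt (B i)) :=
      Finset.sum_nonneg fun i _ => mul_nonneg (hnn i)
        (mul_nonneg (Real.sqrt_nonneg _) (Real.sqrt_nonneg _))
    calc ∑ i, σ i * (Real.sqrt (A i) * Real.sqrt (B i))
        = Real.sqrt ((∑ i, σ i * (Real.sqrt (A i) * Real.sqrt (B i))) ^ 2) :=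
          (Real.sqrt_sq hP0).symm
      _ ≤ Real.sqrt ((∑ i, σ i ^ 2 * A i) * ∑ i, B i) := Real.sqrt_le_sqrt h
      _ = Real.sqrt (∑ i, σ i ^ 2 * A i) * Real.sqrt (∑ i, B i) :=
          Real.sqrt_mul (Finset.sum_nonneg fun i _ => mul_nonneg (sq_nonneg _) (hA0 i)) _
  have htl : ∑ i, σ i ^ 2 * A i ≤ T := by
    rw [hTdef, hFdef]
    refine tlemma hr (fun i => σ i ^ 2) A (fun i => sq_nonneg _) ?_ hA0 hA1 ?_
    · intro i j hij
      exact pow_le_pow_left₀ (hnn j) (hdec i j hij) 2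
    · calc ∑ i, A i ≤ (k : ℝ) := hAk
        _ ≤ (r : ℝ) := by exact_mod_cast hSfin
  have hfin : Real.sqrt (∑ i, σ i ^ 2 * A i) * Real.sqrt (∑ i, B i) ≤ s := by
    have h2 : Real.sqrt (∑ i, B i) ≤ 1 := by
      rw [show (1:ℝ) = Real.sqrt 1 by simp]
      exact Real.sqrt_le_sqrt hB1
    calc Real.sqrt (∑ i, σ i ^ 2 * A i) * Real.sqrt (∑ i, B i)
        ≤ Real.sqrt (∑ i, σ i ^ 2 * A i) * 1 :=
          mul_le_mul_of_nonneg_left h2 (Real.sqrt_nonneg _)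
      _ = Real.sqrt (∑ i, σ i ^ 2 * A i) := mul_one _
      _ ≤ Real.sqrt T := Real.sqrt_le_sqrt htl
      _ = s := hs.symm
  linarith
end

section
/- Let Y ∈ ℂ^{p×q} have SVD Y = U Σ V^H with singular values σ_i, and let τ > 0. Then the matrix SVT_τ(Y) = Σ_i (σ_i − τ)⁺ u_i v_i^H, where u_i, v_i are the columns of U and V and (x)⁺ = max(x,0), is the unique minimizer of the function X ↦ (1/2)‖Y − X‖_F² + τ ‖X‖_* over ℂ^{p×q}. -/
open Finset

/-- Nuclear norm: sum of singular values, i.e. sum of square roots of the eigenvalues of XᴴX. -/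
noncomputable def nuclearNorm {p q : ℕ} (X : Matrix (Fin p) (Fin q) ℂ) : ℝ :=
  ∑ i, Real.sqrt ((Matrix.isHermitian_conjTranspose_mul_self X).eigenvalues i)

namespace SVT

open Matrix

noncomputable def dotc {n : ℕ} (x y : Fin n → ℂ) : ℂ := ∑ a, (starRingEnd ℂ) (x a) * y a

noncomputable def sqnorm {n : ℕ} (x : Fin n → ℂ) : ℝ := ∑ a, ‖x a‖ ^ 2

lemma sqnorm_nonneg {n : ℕ} (x : Fin n → ℂ) : 0 ≤ sqnorm x :=
  Finset.sum_nonneg fun a _ => by positivity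

lemma dotc_self {n : ℕ} (x : Fin n → ℂ) : dotc x x = (sqnorm x : ℂ) := by
  unfold dotc sqnorm
  push_cast
  refine Finset.sum_congr rfl fun a _ => ?_
  rw [mul_comm, Complex.mul_conj']

noncomputable def toE {n : ℕ} (x : Fin n → ℂ) : EuclideanSpace ℂ (Fin n) :=
  (WithLp.equiv 2 _).symm x

@[simp] lemma toE_apply {n : ℕ} (x : Fin n → ℂ) (a : Fin n) : toE x a = x a := rfl

lemma inner_eq {n : ℕ} (x y : Fin n → ℂ) :
    (inner ℂ (toE x) (toE y) : ℂ) = dotc x y := by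
  simp [dotc, PiLp.inner_apply, RCLike.inner_apply, mul_comm]

lemma norm_eq {n : ℕ} (x : Fin n → ℂ) :
    ‖toE x‖ = Real.sqrt (sqnorm x) := by
  simp [EuclideanSpace.norm_eq, sqnorm]

lemma abs_dotc_le {n : ℕ} (x y : Fin n → ℂ) :
    ‖dotc x y‖ ≤ Real.sqrt (sqnorm x) * Real.sqrt (sqnorm y) := by
  have h := norm_inner_le_norm (𝕜 := ℂ) (E := EuclideanSpace ℂ (Fin n)) (toE x) (toE y)
  rwa [inner_eq, norm_eq, norm_eq] at h

lemma re_dotc_le {n : ℕ} (x y : Fin n → ℂ) :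
    (dotc x y).re ≤ Real.sqrt (sqnorm x) * Real.sqrt (sqnorm y) :=
  le_trans (Complex.re_le_norm _) (abs_dotc_le x y)

/-- Bessel's inequality for an orthonormal family given by raw sums. -/
lemma bessel {m n : ℕ} (w : Fin m → Fin n → ℂ)
    (hw : ∀ i j, dotc (w i) (w j) = if i = j then 1 else 0) (x : Fin n → ℂ) :
    ∑ i, ‖dotc (w i) x‖ ^ 2 ≤ sqnorm x := by
  have hortho : Orthonormal ℂ (fun i => toE (w i)) := by
    rw [orthonormal_iff_ite]
    intro i j
    rw [inner_eq]
    exact hw i j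
  have h := hortho.sum_inner_products_le (s := Finset.univ) (toE x)
  simp only [inner_eq, norm_eq] at h
  calc ∑ i, ‖dotc (w i) x‖ ^ 2 ≤ Real.sqrt (sqnorm x) ^ 2 := h
    _ = sqnorm x := Real.sq_sqrt (sqnorm_nonneg x)

/-- norm² of a combination of orthogonal vectors. -/
lemma sqnorm_sum_smul {m n : ℕ} (w : Fin m → Fin n → ℂ) (r : Fin m → ℝ)
    (hw : ∀ i j, dotc (w i) (w j) = if i = j then (r i : ℂ) else 0) (c : Fin m → ℂ) :
    sqnorm (fun a => ∑ i, c i * w i a) = ∑ i, ‖c i‖ ^ 2 * r i := by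
  have expand : dotc (fun a => ∑ i, c i * w i a) (fun a => ∑ i, c i * w i a)
      = ∑ i, ∑ j, ((starRingEnd ℂ) (c j) * c i) * dotc (w j) (w i) := by
    unfold dotc
    simp only [map_sum, _root_.map_mul, Finset.sum_mul, Finset.mul_sum]
    rw [Finset.sum_comm]
    refine Finset.sum_congr rfl fun i _ => ?_
    rw [Finset.sum_comm]
    refine Finset.sum_congr rfl fun j _ => ?_
    exact Finset.sum_congr rfl fun a _ => by ring
  have key : dotc (fun a => ∑ i, c i * w i a) (fun a => ∑ i, c i * w i a)
      = ((∑ i, (‖c i‖ ^ 2 * r i) : ℝ) : ℂ) := by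
    rw [expand]
    simp only [hw, mul_ite, mul_zero, Finset.sum_ite_eq', Finset.mem_univ, if_true]
    push_cast
    refine Finset.sum_congr rfl fun i _ => ?_
    rw [mul_comm ((starRingEnd ℂ) (c i)) (c i), Complex.mul_conj']
  have := dotc_self (fun a => ∑ i, c i * w i a)
  rw [key] at this
  exact_mod_cast (Complex.ofReal_inj.mp this.symm)


/-- Expanding `mulVec` of a structured matrix. -/
lemma mulVec_structured {m p q : ℕ} (g : Fin m → ℂ) (u : Fin m → Fin p → ℂ)
    (v : Fin m → Fin q → ℂ) (x : Fin q → ℂ) :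
    (fun a b => ∑ i, g i * u i a * (starRingEnd ℂ) (v i b) : Matrix (Fin p) (Fin q) ℂ) *ᵥ x
      = fun a => ∑ i, (g i * dotc (v i) x) * u i a := by
  funext a
  unfold Matrix.mulVec dotProduct dotc
  simp only [Finset.sum_mul, Finset.mul_sum]
  rw [Finset.sum_comm]
  exact Finset.sum_congr rfl fun i _ => Finset.sum_congr rfl fun b _ => by ring

/-- sqnorm of a unit vector of an orthonormal family. -/
lemma sqnorm_eq_one {m n : ℕ} {w : Fin m → Fin n → ℂ}
    (hw : ∀ i j, dotc (w i) (w j) = if i = j then 1 else 0) (i : Fin m) :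
    sqnorm (w i) = 1 := by
  have := dotc_self (w i)
  rw [hw i i, if_pos rfl] at this
  exact_mod_cast this.symm

/-- Operator bound for structured matrices. -/
lemma sqnorm_mulVec_structured_le {m p q : ℕ} (g : Fin m → ℝ) (c : ℝ)
    (hg : ∀ i, 0 ≤ g i) (hgc : ∀ i, g i ≤ c)
    (u : Fin m → Fin p → ℂ) (v : Fin m → Fin q → ℂ)
    (hu : ∀ i j, dotc (u i) (u j) = if i = j then 1 else 0)
    (hv : ∀ i j, dotc (v i) (v j) = if i = j then 1 else 0)
    (x : Fin q → ℂ) :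
    sqnorm ((fun a b => ∑ i, (g i : ℂ) * u i a * (starRingEnd ℂ) (v i b)
      : Matrix (Fin p) (Fin q) ℂ) *ᵥ x) ≤ c ^ 2 * sqnorm x := by
  rw [mulVec_structured]
  have hu' : ∀ i j, dotc (u i) (u j) = if i = j then ((1 : ℝ) : ℂ) else 0 := by
    simpa using hu
  rw [sqnorm_sum_smul u (fun _ => (1:ℝ)) hu']
  have step1 : ∑ i, ‖(g i : ℂ) * dotc (v i) x‖ ^ 2 * 1 ≤ c ^ 2 * ∑ i, ‖dotc (v i) x‖ ^ 2 := by
    rw [Finset.mul_sum]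
    refine Finset.sum_le_sum fun i _ => ?_
    rw [mul_one, norm_mul, mul_pow, Complex.norm_real, Real.norm_eq_abs,
      abs_of_nonneg (hg i)]
    have h1 : g i ^ 2 ≤ c ^ 2 := by
      have := hg i
      have := hgc i
      nlinarith
    nlinarith [sq_nonneg ‖dotc (v i) x‖, norm_nonneg (dotc (v i) x)]
  refine le_trans step1 ?_
  have := bessel v hv x
  have hc2 : (0:ℝ) ≤ c ^ 2 := sq_nonneg c
  nlinarith


lemma dotc_conj {n : ℕ} (x y : Fin n → ℂ) : dotc x y = (starRingEnd ℂ) (dotc y x) := by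
  unfold dotc
  rw [map_sum]
  exact Finset.sum_congr rfl fun a _ => by
    rw [_root_.map_mul, Complex.conj_conj]; ring

lemma dotc_sum_right {m n : ℕ} (x : Fin n → ℂ) (c : Fin m → ℂ) (w : Fin m → Fin n → ℂ) :
    dotc x (fun a => ∑ k, c k * w k a) = ∑ k, c k * dotc x (w k) := by
  unfold dotc
  simp only [Finset.mul_sum]
  rw [Finset.sum_comm]
  exact Finset.sum_congr rfl fun k _ => Finset.sum_congr rfl fun a _ => by ring

lemma dotc_mulVec_mulVec {p q : ℕ} (G X : Matrix (Fin p) (Fin q) ℂ) (y z : Fin q → ℂ) :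
    dotc (G *ᵥ y) (X *ᵥ z)
      = ∑ b, ∑ b', ((starRingEnd ℂ) (y b) * z b') * (∑ a, (starRingEnd ℂ) (G a b) * X a b') := by
  have h : dotc (G *ᵥ y) (X *ᵥ z)
      = ∑ b, ∑ b', ((starRingEnd ℂ) (y b') * z b) * (∑ a, (starRingEnd ℂ) (G a b') * X a b) := by
    unfold dotc Matrix.mulVec dotProduct
    simp only [map_sum, _root_.map_mul, Finset.sum_mul, Finset.mul_sum]
    rw [Finset.sum_comm]
    refine Finset.sum_congr rfl fun b _ => ?_
    rw [Finset.sum_comm]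
    exact Finset.sum_congr rfl fun b' _ => Finset.sum_congr rfl fun a _ => by ring
  rw [h, Finset.sum_comm]

lemma dotc_mulVec_self {p q : ℕ} (X : Matrix (Fin p) (Fin q) ℂ) (y z : Fin q → ℂ) :
    dotc (X *ᵥ y) (X *ᵥ z) = dotc y ((Xᴴ * X) *ᵥ z) := by
  rw [dotc_mulVec_mulVec]
  unfold dotc Matrix.mulVec dotProduct
  simp only [Matrix.mul_apply, Matrix.conjTranspose_apply, Finset.mul_sum, Finset.sum_mul]
  refine Finset.sum_congr rfl fun b _ => ?_
  refine Finset.sum_congr rfl fun b' _ => Finset.sum_congr rfl fun a _ => by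
    simp only [Complex.star_def]; ring


section Eigen
variable {p q : ℕ} (X : Matrix (Fin p) (Fin q) ℂ)

noncomputable def Bv (j : Fin q) : Fin q → ℂ :=
  ⇑((Matrix.isHermitian_conjTranspose_mul_self X).eigenvectorBasis j)

noncomputable def ev (j : Fin q) : ℝ :=
  (Matrix.isHermitian_conjTranspose_mul_self X).eigenvalues j

lemma ev_nonneg (j : Fin q) : 0 ≤ ev X j :=
  Matrix.eigenvalues_conjTranspose_mul_self_nonneg X j

lemma nuclear_eq : nuclearNorm X = ∑ j, Real.sqrt (ev X j) := rfl

lemma hB_ortho : ∀ j k, dotc (Bv X j) (Bv X k) = if j = k then 1 else 0 := by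
  intro j k
  have h := orthonormal_iff_ite.mp
    (Matrix.isHermitian_conjTranspose_mul_self X).eigenvectorBasis.orthonormal j k
  rw [← h, ← inner_eq]
  rfl

lemma hB_complete (b b' : Fin q) :
    (∑ j, (starRingEnd ℂ) (Bv X j b) * Bv X j b') = if b = b' then 1 else 0 := by
  have hm := Matrix.mem_unitaryGroup_iff.mp
    ((Matrix.isHermitian_conjTranspose_mul_self X).eigenvectorUnitary).2
  have h2 := congrFun (congrFun (congrArg (fun (M : Matrix (Fin q) (Fin q) ℂ) => M) hm) b') b
  simp only [Matrix.mul_apply, Matrix.star_apply, Matrix.one_apply,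
    Matrix.IsHermitian.eigenvectorUnitary_apply] at h2
  calc (∑ j, (starRingEnd ℂ) (Bv X j b) * Bv X j b')
      = ∑ x, (WithLp.equiv 2 (Fin q → ℂ)) ((Matrix.isHermitian_conjTranspose_mul_self X).eigenvectorBasis x) b' *
          star ((WithLp.equiv 2 (Fin q → ℂ)) ((Matrix.isHermitian_conjTranspose_mul_self X).eigenvectorBasis x) b) := by
        refine Finset.sum_congr rfl fun j _ => ?_
        show (starRingEnd ℂ) (Bv X j b) * Bv X j b' = Bv X j b' * star (Bv X j b)
        rw [Complex.star_def]; ring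
    _ = if b = b' then 1 else 0 := by refine h2.trans ?_; simp [eq_comm]

lemma sqnorm_mulVec_eigen (j : Fin q) : sqnorm (X *ᵥ Bv X j) = ev X j := by
  have h1 : dotc (X *ᵥ Bv X j) (X *ᵥ Bv X j) = dotc (Bv X j) ((Xᴴ * X) *ᵥ Bv X j) :=
    dotc_mulVec_self X _ _
  have h2 : (Xᴴ * X) *ᵥ Bv X j = ev X j • Bv X j :=
    (Matrix.isHermitian_conjTranspose_mul_self X).mulVec_eigenvectorBasis j
  have h3 : dotc (Bv X j) (ev X j • Bv X j) = ((ev X j : ℝ) : ℂ) := by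
    have hb := hB_ortho X j j
    rw [if_pos rfl] at hb
    calc dotc (Bv X j) (ev X j • Bv X j)
        = (ev X j : ℂ) * dotc (Bv X j) (Bv X j) := by
          unfold dotc
          rw [Finset.mul_sum]
          refine Finset.sum_congr rfl fun b _ => ?_
          simp only [Pi.smul_apply, Complex.real_smul]
          ring
      _ = ((ev X j : ℝ) : ℂ) := by rw [hb, mul_one]
  have h4 := dotc_self (X *ᵥ Bv X j)
  rw [h1, h2, h3] at h4
  exact_mod_cast h4.symm

lemma sqnorm_B_one (j : Fin q) : sqnorm (Bv X j) = 1 := sqnorm_eq_one (hB_ortho X) j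

end Eigen

lemma sum_comm3 {α : Type*} [AddCommMonoid α] {n1 n2 n3 : ℕ}
    (f : Fin n1 → Fin n2 → Fin n3 → α) :
    ∑ a, ∑ b, ∑ i, f a b i = ∑ i, ∑ a, ∑ b, f a b i :=
  calc ∑ a, ∑ b, ∑ i, f a b i
      = ∑ a, ∑ i, ∑ b, f a b i := Finset.sum_congr rfl fun a _ => Finset.sum_comm
    _ = ∑ i, ∑ a, ∑ b, f a b i := Finset.sum_comm

lemma trace_eq {p q : ℕ} (G X : Matrix (Fin p) (Fin q) ℂ) :
    ∑ a, ∑ b, (starRingEnd ℂ) (G a b) * X a b = ∑ j, dotc (G *ᵥ Bv X j) (X *ᵥ Bv X j) := by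
  symm
  calc ∑ j, dotc (G *ᵥ Bv X j) (X *ᵥ Bv X j)
      = ∑ j, ∑ b, ∑ b', ((starRingEnd ℂ) (Bv X j b) * Bv X j b') *
          (∑ a, (starRingEnd ℂ) (G a b) * X a b') :=
        Finset.sum_congr rfl fun j _ => dotc_mulVec_mulVec G X _ _
    _ = ∑ b, ∑ b', (∑ j, (starRingEnd ℂ) (Bv X j b) * Bv X j b') *
          (∑ a, (starRingEnd ℂ) (G a b) * X a b') := by
        rw [Finset.sum_comm]
        refine Finset.sum_congr rfl fun b _ => ?_
        rw [Finset.sum_comm]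
        exact Finset.sum_congr rfl fun b' _ => (Finset.sum_mul _ _ _).symm
    _ = ∑ b, ∑ a, (starRingEnd ℂ) (G a b) * X a b := by
        refine Finset.sum_congr rfl fun b _ => ?_
        simp only [hB_complete X, ite_mul, one_mul, zero_mul,
          Finset.sum_ite_eq, Finset.mem_univ, if_true]
    _ = ∑ a, ∑ b, (starRingEnd ℂ) (G a b) * X a b := Finset.sum_comm

lemma dual_le {p q : ℕ} (c : ℝ) (hc : 0 ≤ c) (G X : Matrix (Fin p) (Fin q) ℂ)
    (hG : ∀ x, sqnorm (G *ᵥ x) ≤ c ^ 2 * sqnorm x) :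
    (∑ a, ∑ b, (starRingEnd ℂ) (G a b) * X a b).re ≤ c * nuclearNorm X := by
  rw [trace_eq G X]
  rw [Complex.re_sum Finset.univ (fun j => dotc (G *ᵥ Bv X j) (X *ᵥ Bv X j))]
  rw [nuclear_eq, Finset.mul_sum]
  refine Finset.sum_le_sum fun j _ => ?_
  have h1 := re_dotc_le (G *ᵥ Bv X j) (X *ᵥ Bv X j)
  have h2 : Real.sqrt (sqnorm (G *ᵥ Bv X j)) ≤ c := by
    have h := hG (Bv X j)
    rw [sqnorm_B_one] at h
    calc Real.sqrt (sqnorm (G *ᵥ Bv X j)) ≤ Real.sqrt (c ^ 2 * 1) :=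
          Real.sqrt_le_sqrt (by linarith)
      _ = c := by rw [mul_one, Real.sqrt_sq hc]
  have h3 : Real.sqrt (sqnorm (X *ᵥ Bv X j)) = Real.sqrt (ev X j) := by
    rw [sqnorm_mulVec_eigen]
  rw [h3] at h1
  nlinarith [Real.sqrt_nonneg (sqnorm (G *ᵥ Bv X j)), Real.sqrt_nonneg (ev X j)]

lemma dot_structured_right {m p q : ℕ} (G : Matrix (Fin p) (Fin q) ℂ) (g : Fin m → ℂ)
    (u : Fin m → Fin p → ℂ) (v : Fin m → Fin q → ℂ) :
    ∑ a, ∑ b, (starRingEnd ℂ) (G a b) * (∑ i, g i * u i a * (starRingEnd ℂ) (v i b))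
      = ∑ i, g i * dotc (G *ᵥ v i) (u i) := by
  calc ∑ a, ∑ b, (starRingEnd ℂ) (G a b) * (∑ i, g i * u i a * (starRingEnd ℂ) (v i b))
      = ∑ i, ∑ a, ∑ b, (starRingEnd ℂ) (G a b) * (g i * u i a * (starRingEnd ℂ) (v i b)) := by
        rw [← sum_comm3]
        exact Finset.sum_congr rfl fun a _ => Finset.sum_congr rfl fun b _ =>
          Finset.mul_sum _ _ _
    _ = ∑ i, g i * dotc (G *ᵥ v i) (u i) := by
        refine Finset.sum_congr rfl fun i _ => ?_
        unfold dotc Matrix.mulVec dotProduct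
        simp only [map_sum, _root_.map_mul, Finset.mul_sum, Finset.sum_mul]
        refine Finset.sum_congr rfl fun a _ => ?_
        refine Finset.sum_congr rfl fun b _ => ?_
        ring

lemma dot_structured_left {m p q : ℕ} (X : Matrix (Fin p) (Fin q) ℂ) (g : Fin m → ℂ)
    (u : Fin m → Fin p → ℂ) (v : Fin m → Fin q → ℂ) :
    ∑ a, ∑ b, (starRingEnd ℂ) (∑ i, g i * u i a * (starRingEnd ℂ) (v i b)) * X a b
      = ∑ i, (starRingEnd ℂ) (g i) * dotc (u i) (X *ᵥ v i) := by
  calc ∑ a, ∑ b, (starRingEnd ℂ) (∑ i, g i * u i a * (starRingEnd ℂ) (v i b)) * X a b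
      = ∑ i, ∑ a, ∑ b, ((starRingEnd ℂ) (g i) * (starRingEnd ℂ) (u i a) * v i b) * X a b := by
        rw [← sum_comm3]
        refine Finset.sum_congr rfl fun a _ => Finset.sum_congr rfl fun b _ => ?_
        rw [map_sum, Finset.sum_mul]
        refine Finset.sum_congr rfl fun i _ => ?_
        simp only [_root_.map_mul, Complex.conj_conj]
    _ = ∑ i, (starRingEnd ℂ) (g i) * dotc (u i) (X *ᵥ v i) := by
        refine Finset.sum_congr rfl fun i _ => ?_
        unfold dotc Matrix.mulVec dotProduct
        simp only [Finset.mul_sum, Finset.sum_mul]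
        refine Finset.sum_congr rfl fun a _ => ?_
        refine Finset.sum_congr rfl fun b _ => ?_
        ring

lemma exists_dual {p q : ℕ} (X : Matrix (Fin p) (Fin q) ℂ) :
    ∃ G : Matrix (Fin p) (Fin q) ℂ,
      (∀ x, sqnorm (G *ᵥ x) ≤ sqnorm x) ∧
      (∑ a, ∑ b, (starRingEnd ℂ) (G a b) * X a b) = ((nuclearNorm X : ℝ) : ℂ) := by
  set av : Fin q → Fin p → ℂ := fun j => X *ᵥ Bv X j with hav
  set nv : Fin q → ℝ := fun j => Real.sqrt (ev X j) with hnv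
  have hnvnn : ∀ j, 0 ≤ nv j := fun j => Real.sqrt_nonneg _
  have hnvsq : ∀ j, nv j ^ 2 = ev X j := fun j => Real.sq_sqrt (ev_nonneg X j)
  have ha : ∀ j k, dotc (av j) (av k) = if j = k then ((ev X j : ℝ) : ℂ) else 0 := by
    intro j k
    have h1 : dotc (av j) (av k) = dotc (Bv X j) ((Xᴴ * X) *ᵥ Bv X k) := dotc_mulVec_self X _ _
    have hme : (Xᴴ * X) *ᵥ Bv X k = ev X k • Bv X k :=
      (Matrix.isHermitian_conjTranspose_mul_self X).mulVec_eigenvectorBasis k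
    have h2 : dotc (Bv X j) (ev X k • Bv X k) = ((ev X k : ℝ) : ℂ) * dotc (Bv X j) (Bv X k) := by
      unfold dotc
      rw [Finset.mul_sum]
      refine Finset.sum_congr rfl fun b _ => ?_
      simp only [Pi.smul_apply, Complex.real_smul]
      ring
    rw [h1, hme, h2, hB_ortho X j k]
    by_cases h : j = k
    · subst h; simp
    · simp [h]
  refine ⟨fun a b => ∑ j, ((nv j)⁻¹ : ℂ) * av j a * (starRingEnd ℂ) (Bv X j b), ?_, ?_⟩
  · intro x
    have hmv := mulVec_structured (fun j => ((nv j)⁻¹ : ℂ)) av (Bv X) x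
    rw [hmv, sqnorm_sum_smul av (ev X) ha]
    have hb := bessel (Bv X) (hB_ortho X) x
    refine le_trans (Finset.sum_le_sum (fun j _ => ?_)) hb
    rw [norm_mul, mul_pow]
    have hcoef : ‖((nv j)⁻¹ : ℂ)‖ ^ 2 * ev X j ≤ 1 := by
      rw [norm_inv, Complex.norm_real, Real.norm_eq_abs, abs_of_nonneg (hnvnn j), inv_pow]
      by_cases hz : nv j = 0
      · rw [← hnvsq j, hz]; norm_num
      · rw [← hnvsq j]
        have := hnvnn j
        rw [inv_mul_cancel₀ (by positivity)]
    nlinarith [sq_nonneg ‖dotc (Bv X j) x‖, norm_nonneg (dotc (Bv X j) x),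
      sq_nonneg ‖((nv j)⁻¹ : ℂ)‖, ev_nonneg X j]
  · rw [dot_structured_left X (fun j => ((nv j)⁻¹ : ℂ)) av (Bv X)]
    rw [nuclear_eq]
    push_cast
    refine Finset.sum_congr rfl fun j _ => ?_
    have hXB : X *ᵥ Bv X j = av j := rfl
    rw [hXB, ha j j, if_pos rfl, map_inv₀, Complex.conj_ofReal,
      ← Complex.ofReal_inv, ← Complex.ofReal_mul]
    norm_cast
    by_cases hz : nv j = 0
    · rw [hz, ← hnvsq j, hz]; norm_num
    · rw [← hnvsq j]; field_simp; rw [Real.sqrt_sq (hnvnn j)]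

end SVT

open SVT Matrix

/-- singular value thresholding is the unique minimizer of
X ↦ (1/2)‖Y − X‖_F² + τ‖X‖_*. -/
theorem stmt9 (p q : ℕ)
    (u : Fin (min p q) → Fin p → ℂ) (v : Fin (min p q) → Fin q → ℂ)
    (hu : ∀ i i', ∑ a, (starRingEnd ℂ) (u i a) * u i' a = if i = i' then 1 else 0)
    (hv : ∀ i i', ∑ b, (starRingEnd ℂ) (v i b) * v i' b = if i = i' then 1 else 0)
    (σ : Fin (min p q) → ℝ) (hdec : ∀ i j, i ≤ j → σ j ≤ σ i) (hnn : ∀ i, 0 ≤ σ i)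
    (Y : Matrix (Fin p) (Fin q) ℂ)
    (hY : Y = fun a b => ∑ i, (σ i : ℂ) * u i a * (starRingEnd ℂ) (v i b))
    (τ : ℝ) (hτ : 0 < τ)
    (Xhat : Matrix (Fin p) (Fin q) ℂ)
    (hXhat : Xhat = fun a b => ∑ i, ((max (σ i - τ) 0 : ℝ) : ℂ) * u i a * (starRingEnd ℂ) (v i b))
    (F : Matrix (Fin p) (Fin q) ℂ → ℝ)
    (hF : F = fun X => (1 / 2) * (∑ a, ∑ b, ‖Y a b - X a b‖ ^ 2) + τ * nuclearNorm X) :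
    ∀ X : Matrix (Fin p) (Fin q) ℂ, F Xhat ≤ F X ∧ (F X = F Xhat → X = Xhat) := by
  intro X
  have hu' : ∀ i j, dotc (u i) (u j) = if i = j then 1 else 0 := hu
  have hv' : ∀ i j, dotc (v i) (v j) = if i = j then 1 else 0 := hv
  -- coefficient functions
  set sf : Fin (min p q) → ℝ := fun i => max (σ i - τ) 0 with hsf
  set mf : Fin (min p q) → ℝ := fun i => σ i - max (σ i - τ) 0 with hmf
  have hs_nn : ∀ i, 0 ≤ sf i := fun i => le_max_right _ _
  have hm_nn : ∀ i, 0 ≤ mf i := by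
    intro i
    have := hnn i
    simp only [hmf, hsf]
    rcases le_total (σ i - τ) 0 with h | h
    · rw [max_eq_right h]; linarith
    · rw [max_eq_left h]; linarith
  have hm_le : ∀ i, mf i ≤ τ := by
    intro i
    simp only [hmf]
    rcases le_total (σ i - τ) 0 with h | h
    · rw [max_eq_right h]; linarith
    · rw [max_eq_left h]; linarith
  have hms : ∀ i, sf i * mf i = τ * sf i := by
    intro i
    simp only [hmf, hsf]
    rcases le_total (σ i - τ) 0 with h | h
    · rw [max_eq_right h]; ring_nf
    · rw [max_eq_left h]; ring_nf
  -- the residual matrix W = Y - Xhat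
  set W : Matrix (Fin p) (Fin q) ℂ :=
    fun a b => ∑ i, ((mf i : ℝ) : ℂ) * u i a * (starRingEnd ℂ) (v i b) with hWdef
  have hW : ∀ a b, Y a b - Xhat a b = W a b := by
    intro a b
    rw [hY, hXhat, hWdef]
    simp only
    rw [← Finset.sum_sub_distrib]
    refine Finset.sum_congr rfl fun i _ => ?_
    simp only [hmf]
    push_cast
    ring
  -- pointwise expansion of the squared distance
  have hpt : ∀ a b, ‖Y a b - X a b‖ ^ 2
      = ‖Y a b - Xhat a b‖ ^ 2
        - 2 * ((starRingEnd ℂ) (W a b) * (X a b - Xhat a b)).re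
        + ‖X a b - Xhat a b‖ ^ 2 := by
    intro a b
    have hsplit : Y a b - X a b = (Y a b - Xhat a b) - (X a b - Xhat a b) := by ring
    rw [hsplit, hW a b]
    set w := W a b
    set d := X a b - Xhat a b
    have e1 : ‖w - d‖ ^ 2 = Complex.normSq (w - d) := by
      rw [← Complex.sq_norm]
    have e2 : ‖w‖ ^ 2 = Complex.normSq w := by rw [← Complex.sq_norm]
    have e3 : ‖d‖ ^ 2 = Complex.normSq d := by rw [← Complex.sq_norm]
    rw [e1, e2, e3]
    have hre : ((starRingEnd ℂ) w * d).re = (w * (starRingEnd ℂ) d).re := by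
      conv_lhs => rw [← Complex.conj_re]
      rw [_root_.map_mul, Complex.conj_conj]
    rw [hre]
    have := Complex.normSq_sub w d
    linarith
  -- sum the expansion
  have hresum : ∀ (M : Matrix (Fin p) (Fin q) ℂ),
      (∑ a, ∑ b, M a b).re = ∑ a, ∑ b, (M a b).re := by
    intro M
    rw [Complex.re_sum]
    exact Finset.sum_congr rfl fun a _ => Complex.re_sum _ _
  have hsum : ∑ a, ∑ b, ‖Y a b - X a b‖ ^ 2
      = (∑ a, ∑ b, ‖Y a b - Xhat a b‖ ^ 2)
        - 2 * (∑ a, ∑ b, (starRingEnd ℂ) (W a b) * (X a b - Xhat a b)).re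
        + ∑ a, ∑ b, ‖X a b - Xhat a b‖ ^ 2 := by
    have hre' := hresum (fun a b => (starRingEnd ℂ) (W a b) * (X a b - Xhat a b))
    rw [hre']
    calc ∑ a, ∑ b, ‖Y a b - X a b‖ ^ 2
        = ∑ a, ∑ b, (‖Y a b - Xhat a b‖ ^ 2
            - 2 * ((starRingEnd ℂ) (W a b) * (X a b - Xhat a b)).re
            + ‖X a b - Xhat a b‖ ^ 2) :=
          Finset.sum_congr rfl fun a _ => Finset.sum_congr rfl fun b _ => hpt a b
      _ = _ := by
          simp only [Finset.sum_add_distrib, Finset.sum_sub_distrib, ← Finset.mul_sum]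
  -- dot products split
  have hdsplit : (∑ a, ∑ b, (starRingEnd ℂ) (W a b) * (X a b - Xhat a b))
      = (∑ a, ∑ b, (starRingEnd ℂ) (W a b) * X a b)
        - ∑ a, ∑ b, (starRingEnd ℂ) (W a b) * Xhat a b := by
    rw [← Finset.sum_sub_distrib]
    refine Finset.sum_congr rfl fun a _ => ?_
    rw [← Finset.sum_sub_distrib]
    exact Finset.sum_congr rfl fun b _ => by ring
  -- term 2 : dual bound for X
  have hterm2 : (∑ a, ∑ b, (starRingEnd ℂ) (W a b) * X a b).re ≤ τ * nuclearNorm X := by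
    refine dual_le τ hτ.le W X fun x => ?_
    rw [hWdef]
    exact sqnorm_mulVec_structured_le mf τ hm_nn hm_le u v hu' hv' x
  -- term 3a : value of ⟨W, Xhat⟩
  have hWv : ∀ i, dotc (W *ᵥ v i) (u i) = ((mf i : ℝ) : ℂ) := by
    intro i
    rw [hWdef, mulVec_structured]
    rw [dotc_conj, dotc_sum_right]
    have : ∑ k, ((mf k : ℝ) : ℂ) * dotc (v k) (v i) * dotc (u i) (u k)
        = ((mf i : ℝ) : ℂ) := by
      rw [Finset.sum_eq_single i]
      · rw [hv' i i, hu' i i]; simp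
      · intro k _ hk
        rw [hu' i k, if_neg (Ne.symm hk), mul_zero]
      · intro h; exact absurd (Finset.mem_univ i) h
    rw [this, Complex.conj_ofReal]
  have hterm3a : (∑ a, ∑ b, (starRingEnd ℂ) (W a b) * Xhat a b)
      = ((τ * ∑ i, sf i : ℝ) : ℂ) := by
    rw [hXhat]
    rw [dot_structured_right W (fun i => ((sf i : ℝ) : ℂ)) u v]
    calc ∑ i, ((sf i : ℝ) : ℂ) * dotc (W *ᵥ v i) (u i)
        = ∑ i, ((sf i * mf i : ℝ) : ℂ) := by
          refine Finset.sum_congr rfl fun i _ => ?_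
          rw [hWv i]
          push_cast
          ring
      _ = ((τ * ∑ i, sf i : ℝ) : ℂ) := by
          push_cast
          rw [Finset.mul_sum]
          refine Finset.sum_congr rfl fun i _ => ?_
          have := hms i
          push_cast
          exact_mod_cast congrArg (Complex.ofReal) this
  -- term 3b : nuclearNorm Xhat ≤ ∑ sf
  have hterm3b : nuclearNorm Xhat ≤ ∑ i, sf i := by
    obtain ⟨G, hG1, hG2⟩ := exists_dual Xhat
    have hdot : ∑ a, ∑ b, (starRingEnd ℂ) (G a b) * Xhat a b
        = ∑ i, ((sf i : ℝ) : ℂ) * dotc (G *ᵥ v i) (u i) := by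
      conv_lhs => rw [hXhat]
      exact dot_structured_right G (fun i => ((sf i : ℝ) : ℂ)) u v
    have hval : ∑ i, ((sf i : ℝ) : ℂ) * dotc (G *ᵥ v i) (u i)
        = ((nuclearNorm Xhat : ℝ) : ℂ) := by rw [← hdot]; exact hG2
    have hre := congrArg Complex.re hval
    rw [Complex.ofReal_re, Complex.re_sum] at hre
    rw [← hre]
    refine Finset.sum_le_sum fun i _ => ?_
    have h1 : (((sf i : ℝ) : ℂ) * dotc (G *ᵥ v i) (u i)).re
        = sf i * (dotc (G *ᵥ v i) (u i)).re := Complex.re_ofReal_mul _ _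
    rw [h1]
    have h2 : (dotc (G *ᵥ v i) (u i)).re ≤ 1 := by
      have hcs := re_dotc_le (G *ᵥ v i) (u i)
      have hgv : Real.sqrt (sqnorm (G *ᵥ v i)) ≤ 1 := by
        have := hG1 (v i)
        rw [sqnorm_eq_one hv' i] at this
        calc Real.sqrt (sqnorm (G *ᵥ v i)) ≤ Real.sqrt 1 := Real.sqrt_le_sqrt this
          _ = 1 := Real.sqrt_one
      have hui : Real.sqrt (sqnorm (u i)) = 1 := by
        rw [sqnorm_eq_one hu' i, Real.sqrt_one]
      rw [hui] at hcs
      calc (dotc (G *ᵥ v i) (u i)).re ≤ Real.sqrt (sqnorm (G *ᵥ v i)) * 1 := hcs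
        _ ≤ 1 := by rw [mul_one]; exact hgv
    nlinarith [hs_nn i]
  -- main inequality
  have hmain : F Xhat + (1 / 2) * (∑ a, ∑ b, ‖X a b - Xhat a b‖ ^ 2) ≤ F X := by
    rw [hF]
    simp only
    rw [hsum, hdsplit]
    have hre3a := congrArg Complex.re hterm3a
    rw [Complex.ofReal_re] at hre3a
    have hXX : ((∑ a, ∑ b, (starRingEnd ℂ) (W a b) * X a b)
        - ∑ a, ∑ b, (starRingEnd ℂ) (W a b) * Xhat a b).re
        = (∑ a, ∑ b, (starRingEnd ℂ) (W a b) * X a b).re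
          - (∑ a, ∑ b, (starRingEnd ℂ) (W a b) * Xhat a b).re := Complex.sub_re _ _
    rw [hXX, hre3a]
    have hsnn : 0 ≤ ∑ i, sf i := Finset.sum_nonneg fun i _ => hs_nn i
    nlinarith [hterm2, hterm3b, hτ]
  have hDnn : 0 ≤ ∑ a, ∑ b, ‖X a b - Xhat a b‖ ^ 2 :=
    Finset.sum_nonneg fun a _ => Finset.sum_nonneg fun b _ => by positivity
  constructor
  · linarith
  · intro heq
    have hD0 : ∑ a, ∑ b, ‖X a b - Xhat a b‖ ^ 2 ≤ 0 := by linarith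
    have hall : ∀ a ∈ Finset.univ, ∀ b ∈ Finset.univ, ‖X a b - Xhat a b‖ ^ 2 = 0 := by
      have h1 := (Finset.sum_eq_zero_iff_of_nonneg
        (fun a _ => Finset.sum_nonneg fun b _ => by positivity)).mp (le_antisymm hD0 hDnn)
      intro a ha
      exact (Finset.sum_eq_zero_iff_of_nonneg (fun b _ => by positivity)).mp (h1 a ha)
    funext a b
    have := hall a (Finset.mem_univ a) b (Finset.mem_univ b)
    have hz : X a b - Xhat a b = 0 := by
      rw [pow_eq_zero_iff (two_ne_zero)] at this
      exact norm_eq_zero.mp this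
    linear_combination hz
end

section
/- Let Y ∈ ℂ^{p×q} have SVD Y = U Σ V^H with singular values σ_i, and let λ > 0. Then the matrix X̂ = Σ_i σ_i 𝟙{σ_i > √(2λ)} u_i v_i^H obtained by hard-thresholding the singular values at level √(2λ) is a global minimizer of the function X ↦ (1/2)‖Y − X‖_F² + λ rank(X) over ℂ^{p×q}. -/
open Finset

lemma keyB {E : Type*} [NormedAddCommGroup E] [InnerProductSpace ℂ E]
    {m κ : ℕ} (w : Fin m → E) (d : Fin m → Fin κ → ℂ) (r : Fin m → ℝ)
    (hd : ∀ i j, ∑ b, (starRingEnd ℂ) (d i b) * d j b = if i = j then (r i : ℂ) else 0) :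
    ∑ b, ‖∑ i, d i b • w i‖ ^ 2 = ∑ i, r i * ‖w i‖ ^ 2 := by
  have h1 : ∀ b, (‖∑ i, d i b • w i‖ : ℝ) ^ 2 =
      Complex.re (∑ i, ∑ j, ((starRingEnd ℂ) (d i b) * d j b) *
        (inner ℂ (w i) (w j) : ℂ)) := by
    intro b
    rw [← inner_self_eq_norm_sq (𝕜 := ℂ)]
    simp_rw [sum_inner, inner_sum, inner_smul_left, inner_smul_right, mul_assoc]
    rfl
  simp_rw [h1]
  rw [← Complex.re_sum]
  have h2 : (∑ b, ∑ i, ∑ j, ((starRingEnd ℂ) (d i b) * d j b) * (inner ℂ (w i) (w j) : ℂ))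
      = ∑ i, ∑ j, (∑ b, (starRingEnd ℂ) (d i b) * d j b) * (inner ℂ (w i) (w j) : ℂ) := by
    rw [Finset.sum_comm]
    refine Finset.sum_congr rfl fun i _ => ?_
    rw [Finset.sum_comm]
    refine Finset.sum_congr rfl fun j _ => ?_
    rw [Finset.sum_mul]
  rw [h2]
  simp_rw [hd, ite_mul, zero_mul, Finset.sum_ite_eq, Finset.mem_univ, if_true]
  rw [Complex.re_sum]
  refine Finset.sum_congr rfl fun i _ => ?_
  rw [Complex.re_ofReal_mul, ← inner_self_eq_norm_sq (𝕜 := ℂ) (w i)]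
  rfl

lemma colNorm {p q : ℕ} (M : Matrix (Fin p) (Fin q) ℂ) :
    ∑ a, ∑ b, ‖M a b‖ ^ 2 =
      ∑ b, ‖(WithLp.equiv 2 (Fin p → ℂ)).symm (fun a => M a b)‖ ^ 2 := by
  rw [Finset.sum_comm]
  refine Finset.sum_congr rfl fun b _ => ?_
  rw [EuclideanSpace.norm_eq, Real.sq_sqrt (by positivity)]
  rfl

lemma colDecomp {p m : ℕ} (u : Fin m → Fin p → ℂ) (c : Fin m → ℂ) :
    (WithLp.equiv 2 (Fin p → ℂ)).symm (fun a => ∑ i, c i * u i a) =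
      ∑ i, c i • (WithLp.equiv 2 (Fin p → ℂ)).symm (u i) := by
  ext a
  simp

lemma hdGen {q m : ℕ} (v : Fin m → Fin q → ℂ)
    (hv' : ∀ i j, ∑ b, v i b * (starRingEnd ℂ) (v j b) = if i = j then 1 else 0)
    (c : Fin m → ℂ) (r : Fin m → ℝ) (hcr : ∀ i, (starRingEnd ℂ) (c i) * c i = (r i : ℂ))
    (i j : Fin m) :
    ∑ b, (starRingEnd ℂ) (c i * (starRingEnd ℂ) (v i b)) * (c j * (starRingEnd ℂ) (v j b)) =
      if i = j then (r i : ℂ) else 0 := by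
  have h : ∀ b, (starRingEnd ℂ) (c i * (starRingEnd ℂ) (v i b)) * (c j * (starRingEnd ℂ) (v j b)) =
      ((starRingEnd ℂ) (c i) * c j) * (v i b * (starRingEnd ℂ) (v j b)) := by
    intro b; simp only [map_mul, Complex.conj_conj]; ring
  simp_rw [h, ← Finset.mul_sum, hv' i j]
  split_ifs with hij
  · subst hij; rw [mul_one, hcr]
  · rw [mul_zero]


lemma besselBound {E : Type*} [NormedAddCommGroup E] [InnerProductSpace ℂ E]
    [FiniteDimensional ℂ E] (W : Submodule ℂ E) {m : ℕ} (U : Fin m → E)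
    (hU : Orthonormal ℂ U) :
    ∑ i, ‖(W.orthogonalProjection (U i) : E)‖ ^ 2 ≤ (Module.finrank ℂ W : ℝ) := by
  set e := stdOrthonormalBasis ℂ W with he
  have hproj : ∀ y : E, ‖(W.orthogonalProjection y : E)‖ ^ 2
      = ∑ k, ‖(inner ℂ ((e k : E)) y : ℂ)‖ ^ 2 := by
    intro y
    have h1 : ∀ k, (inner ℂ ((e k : E)) y : ℂ) = inner ℂ (e k) (W.orthogonalProjection y) := by
      intro k
      rw [Submodule.coe_inner]
      have h0 : (inner ℂ ((e k : E)) (y - (W.orthogonalProjection y : E)) : ℂ) = 0 := by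
        rw [inner_eq_zero_symm]
        exact Submodule.starProjection_inner_eq_zero y _ (SetLike.coe_mem _)
      rw [inner_sub_right] at h0
      linear_combination h0
    have h2 : ‖(W.orthogonalProjection y : E)‖ = ‖e.repr (W.orthogonalProjection y)‖ := by
      rw [LinearIsometryEquiv.norm_map]; rfl
    rw [h2, EuclideanSpace.norm_eq, Real.sq_sqrt (by positivity)]
    refine Finset.sum_congr rfl fun k _ => ?_
    rw [e.repr_apply_apply, ← h1]
  have hek : ∀ k, ‖(e k : E)‖ = 1 := fun k => e.orthonormal.1 k
  calc ∑ i, ‖(W.orthogonalProjection (U i) : E)‖ ^ 2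
      = ∑ i, ∑ k, ‖(inner ℂ ((e k : E)) (U i) : ℂ)‖ ^ 2 :=
        Finset.sum_congr rfl fun i _ => hproj (U i)
    _ = ∑ k, ∑ i, ‖(inner ℂ (U i) ((e k : E)) : ℂ)‖ ^ 2 := by
        rw [Finset.sum_comm]
        exact Finset.sum_congr rfl fun k _ => Finset.sum_congr rfl fun i _ => by
          rw [norm_inner_symm]
    _ ≤ ∑ k : Fin (Module.finrank ℂ W), (1:ℝ) := by
        refine Finset.sum_le_sum fun k _ => ?_
        have := hU.sum_inner_products_le (s := Finset.univ) ((e k : E))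
        rwa [hek k, one_pow] at this
    _ = (Module.finrank ℂ W : ℝ) := by simp

set_option maxHeartbeats 1000000 in
open Matrix in
/-- hard-thresholding of singular values at level √(2λ) gives a global
minimizer of X ↦ (1/2)‖Y − X‖_F² + λ rank(X). -/
theorem stmt10 (p q : ℕ)
    (u : Fin (min p q) → Fin p → ℂ) (v : Fin (min p q) → Fin q → ℂ)
    (hu : ∀ i i', ∑ a, (starRingEnd ℂ) (u i a) * u i' a = if i = i' then 1 else 0)
    (hv : ∀ i i', ∑ b, (starRingEnd ℂ) (v i b) * v i' b = if i = i' then 1 else 0)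
    (σ : Fin (min p q) → ℝ) (hdec : ∀ i j, i ≤ j → σ j ≤ σ i) (hnn : ∀ i, 0 ≤ σ i)
    (Y : Matrix (Fin p) (Fin q) ℂ)
    (hY : Y = fun a b => ∑ i, (σ i : ℂ) * u i a * (starRingEnd ℂ) (v i b))
    (lam : ℝ) (hlam : 0 < lam)
    (Xhat : Matrix (Fin p) (Fin q) ℂ)
    (hXhat : Xhat = fun a b => ∑ i,
      (if Real.sqrt (2 * lam) < σ i then ((σ i : ℝ) : ℂ) else 0) * u i a * (starRingEnd ℂ) (v i b))
    (F : Matrix (Fin p) (Fin q) ℂ → ℝ)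
    (hF : F = fun X => (1 / 2) * (∑ a, ∑ b, ‖Y a b - X a b‖ ^ 2) + lam * (X.rank : ℝ)) :
    ∀ X : Matrix (Fin p) (Fin q) ℂ, F Xhat ≤ F X := by
  have h2lam : (0:ℝ) ≤ 2 * lam := by positivity
  set thr := Real.sqrt (2 * lam) with hthr
  have hthr2 : thr ^ 2 = 2 * lam := Real.sq_sqrt h2lam
  have hthr0 : 0 ≤ thr := Real.sqrt_nonneg _
  set U : Fin (min p q) → EuclideanSpace ℂ (Fin p) :=
    fun i => (WithLp.equiv 2 (Fin p → ℂ)).symm (u i) with hUdef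
  have hU : Orthonormal ℂ U := by
    rw [orthonormal_iff_ite]
    intro i j
    simpa [hUdef, PiLp.inner_apply, RCLike.inner_apply, mul_comm] using hu i j
  have hUnorm : ∀ i, ‖U i‖ = 1 := hU.1
  have hv' : ∀ i j, ∑ b, v i b * (starRingEnd ℂ) (v j b) = if i = j then 1 else 0 := by
    intro i j
    have h := congrArg (starRingEnd ℂ) (hv i j)
    rw [map_sum] at h
    simpa only [_root_.map_mul, Complex.conj_conj, apply_ite, _root_.map_one, _root_.map_zero] using h
  -- the common benchmark value
  set M : ℝ := ∑ i, min (σ i ^ 2 / 2) lam with hM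
  have hmin : ∀ i, min (σ i ^ 2 / 2) lam = if thr < σ i then lam else σ i ^ 2 / 2 := by
    intro i
    split_ifs with h
    · refine min_eq_right ?_
      nlinarith [hnn i]
    · push_neg at h
      refine min_eq_left ?_
      nlinarith [hnn i]
  -- Part 1 : F Xhat ≤ M
  have part1 : F Xhat ≤ M := by
    simp only [hF]
    set c : Fin (min p q) → ℂ := fun i => if thr < σ i then 0 else (σ i : ℂ) with hc
    have hres : ∀ a b, Y a b - Xhat a b = ∑ i, (c i * (starRingEnd ℂ) (v i b)) * u i a := by
      intro a b
      rw [hY, hXhat, ← Finset.sum_sub_distrib]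
      refine Finset.sum_congr rfl fun i _ => ?_
      simp only [hc]
      split_ifs with h <;> ring
    have hfrob : ∑ a, ∑ b, ‖Y a b - Xhat a b‖ ^ 2
        = ∑ i, (if thr < σ i then 0 else σ i ^ 2) := by
      calc ∑ a, ∑ b, ‖Y a b - Xhat a b‖ ^ 2
          = ∑ b, ‖(WithLp.equiv 2 (Fin p → ℂ)).symm (fun a => Y a b - Xhat a b)‖ ^ 2 :=
            colNorm (fun a b => Y a b - Xhat a b)
        _ = ∑ b, ‖∑ i, (c i * (starRingEnd ℂ) (v i b)) • U i‖ ^ 2 := by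
            refine Finset.sum_congr rfl fun b _ => ?_
            rw [show (fun a => Y a b - Xhat a b)
                = fun a => ∑ i, (c i * (starRingEnd ℂ) (v i b)) * u i a from
              funext fun a => hres a b, colDecomp u _]
        _ = ∑ i, (if thr < σ i then 0 else σ i ^ 2) * ‖U i‖ ^ 2 := by
            refine keyB U _ _ (hdGen v hv' c _ ?_)
            intro i
            simp only [hc]
            split_ifs with h
            · simp
            · rw [Complex.conj_ofReal]
              push_cast
              ring
        _ = ∑ i, (if thr < σ i then 0 else σ i ^ 2) := by
            refine Finset.sum_congr rfl fun i _ => ?_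
            rw [hUnorm i]; ring
    set S : Finset (Fin (min p q)) := Finset.univ.filter (fun i => thr < σ i) with hS
    have hrank : Xhat.rank ≤ S.card := by
      set T : Finset (Fin p → ℂ) := S.image u with hT
      have h1 : Xhat.rank = Module.finrank ℂ (Submodule.span ℂ (Set.range Xhatᵀ)) :=
        Matrix.rank_eq_finrank_span_cols Xhat
      have h2 : Submodule.span ℂ (Set.range Xhatᵀ) ≤ Submodule.span ℂ (T : Set (Fin p → ℂ)) := by
        rw [Submodule.span_le]
        rintro _ ⟨b, rfl⟩
        have hcol : Xhatᵀ b = ∑ i ∈ S, ((σ i : ℂ) * (starRingEnd ℂ) (v i b)) • u i := by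
          funext a
          rw [show ((∑ i ∈ S, ((σ i : ℂ) * (starRingEnd ℂ) (v i b)) • u i) a)
              = ∑ i ∈ S, (((σ i : ℂ) * (starRingEnd ℂ) (v i b)) • u i) a from
            Finset.sum_apply a S _]
          rw [Matrix.transpose_apply, hXhat]
          rw [Finset.sum_filter]
          refine Finset.sum_congr rfl fun i _ => ?_
          split_ifs with h
          · simp only [Pi.smul_apply, smul_eq_mul]; ring
          · simp
        rw [SetLike.mem_coe, hcol]
        refine Submodule.sum_mem _ fun i hi => Submodule.smul_mem _ _ ?_
        exact Submodule.subset_span (Finset.mem_coe.mpr (Finset.mem_image_of_mem u hi))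
      calc Xhat.rank = Module.finrank ℂ (Submodule.span ℂ (Set.range Xhatᵀ)) := h1
        _ ≤ Module.finrank ℂ (Submodule.span ℂ (T : Set (Fin p → ℂ))) := Submodule.finrank_mono h2
        _ ≤ T.card := finrank_span_finset_le_card T
        _ ≤ S.card := Finset.card_image_le
    have hcardS : (S.card : ℝ) * lam = ∑ i, (if thr < σ i then lam else 0) := by
      rw [← Finset.sum_filter, ← hS, Finset.sum_const, nsmul_eq_mul]
    have hranklam : lam * (Xhat.rank : ℝ) ≤ ∑ i, (if thr < σ i then lam else 0) := by
      rw [← hcardS, mul_comm]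
      have : (Xhat.rank : ℝ) ≤ (S.card : ℝ) := Nat.cast_le.mpr hrank
      nlinarith
    rw [hfrob, hM]
    have hsplit : ∑ i, min (σ i ^ 2 / 2) lam
        = ∑ i, ((if thr < σ i then 0 else σ i ^ 2) / 2 + (if thr < σ i then lam else 0)) := by
      refine Finset.sum_congr rfl fun i _ => ?_
      rw [hmin i]
      split_ifs with h <;> ring
    rw [hsplit, Finset.sum_add_distrib]
    have : (1:ℝ)/2 * (∑ i, if thr < σ i then 0 else σ i ^ 2)
        = ∑ i, (if thr < σ i then 0 else σ i ^ 2) / 2 := by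
      rw [Finset.mul_sum]; exact Finset.sum_congr rfl fun i _ => by ring
    rw [this]
    linarith [hranklam]
  -- Part 2 : M ≤ F X for every X
  have part2 : ∀ X : Matrix (Fin p) (Fin q) ℂ, M ≤ F X := by
    intro X
    simp only [hF]
    set xcol : Fin q → EuclideanSpace ℂ (Fin p) :=
      fun b => (WithLp.equiv 2 (Fin p → ℂ)).symm (fun a => X a b) with hxcol
    set ycol : Fin q → EuclideanSpace ℂ (Fin p) :=
      fun b => (WithLp.equiv 2 (Fin p → ℂ)).symm (fun a => Y a b) with hycol
    set W : Submodule ℂ (EuclideanSpace ℂ (Fin p)) :=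
      Submodule.span ℂ (Set.range xcol) with hW
    have hWrank : Module.finrank ℂ W ≤ X.rank := by
      rw [Matrix.rank_eq_finrank_span_cols]
      rw [← LinearEquiv.finrank_map_eq (WithLp.linearEquiv 2 ℂ (Fin p → ℂ)) W, hW,
        Submodule.map_span, ← Set.range_comp]
      exact le_of_eq rfl
    set P : EuclideanSpace ℂ (Fin p) → EuclideanSpace ℂ (Fin p) :=
      fun y => (W.orthogonalProjection y : EuclideanSpace ℂ (Fin p)) with hP
    have pyth : ∀ y, ‖y‖ ^ 2 = ‖y - P y‖ ^ 2 + ‖P y‖ ^ 2 := by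
      intro y
      have h0 : (inner ℂ (y - P y) (P y) : ℂ) = 0 :=
        Submodule.starProjection_inner_eq_zero y _ (SetLike.coe_mem _)
      have h := norm_add_sq (𝕜 := ℂ) (y - P y) (P y)
      rw [sub_add_cancel, h0] at h
      simpa using h
    have hmindist : ∀ b, ‖ycol b - P (ycol b)‖ ≤ ‖ycol b - xcol b‖ := by
      intro b
      simp only [hP]
      rw [← Submodule.starProjection_apply, Submodule.starProjection_minimal]
      exact ciInf_le ⟨0, by rintro r ⟨z, rfl⟩; positivity⟩
        (⟨xcol b, Submodule.subset_span (Set.mem_range_self b)⟩ : W)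
    have hycoldec : ∀ b, ycol b = ∑ i, ((σ i : ℂ) * (starRingEnd ℂ) (v i b)) • U i := by
      intro b
      simp only [hycol]
      rw [show (fun a => Y a b) = fun a => ∑ i, ((σ i : ℂ) * (starRingEnd ℂ) (v i b)) * u i a by
        funext a; rw [hY]; exact Finset.sum_congr rfl fun i _ => by ring]
      exact colDecomp u _
    have hPycol : ∀ b, P (ycol b) = ∑ i, ((σ i : ℂ) * (starRingEnd ℂ) (v i b)) • P (U i) := by
      intro b
      simp only [hP, hycoldec b]
      rw [map_sum]
      push_cast [Submodule.coe_sum]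
      exact Finset.sum_congr rfl fun i _ => by rw [_root_.map_smul]; rfl
    set t : Fin (min p q) → ℝ := fun i => ‖P (U i)‖ ^ 2 with ht
    have hdσ : ∀ i j, ∑ b, (starRingEnd ℂ) ((σ i : ℂ) * (starRingEnd ℂ) (v i b))
        * ((σ j : ℂ) * (starRingEnd ℂ) (v j b)) = if i = j then ((σ i ^ 2 : ℝ) : ℂ) else 0 := by
      refine hdGen v hv' _ _ ?_
      intro i
      rw [Complex.conj_ofReal]; push_cast; ring
    have hsumY : ∑ b, ‖ycol b‖ ^ 2 = ∑ i, σ i ^ 2 := by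
      calc ∑ b, ‖ycol b‖ ^ 2
          = ∑ b, ‖∑ i, ((σ i : ℂ) * (starRingEnd ℂ) (v i b)) • U i‖ ^ 2 := by
            refine Finset.sum_congr rfl fun b _ => ?_; rw [hycoldec b]
        _ = ∑ i, σ i ^ 2 * ‖U i‖ ^ 2 := keyB U _ _ hdσ
        _ = ∑ i, σ i ^ 2 := by
            refine Finset.sum_congr rfl fun i _ => ?_; rw [hUnorm i]; ring
    have hsumP : ∑ b, ‖P (ycol b)‖ ^ 2 = ∑ i, σ i ^ 2 * t i := by
      calc ∑ b, ‖P (ycol b)‖ ^ 2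
          = ∑ b, ‖∑ i, ((σ i : ℂ) * (starRingEnd ℂ) (v i b)) • P (U i)‖ ^ 2 := by
            refine Finset.sum_congr rfl fun b _ => ?_; rw [hPycol b]
        _ = ∑ i, σ i ^ 2 * ‖P (U i)‖ ^ 2 := keyB _ _ _ hdσ
        _ = ∑ i, σ i ^ 2 * t i := rfl
    have ht0 : ∀ i, 0 ≤ t i := fun i => by positivity
    have ht1 : ∀ i, t i ≤ 1 := by
      intro i
      show ‖P (U i)‖ ^ 2 ≤ 1
      have h := pyth (U i)
      rw [hUnorm i] at h
      nlinarith [sq_nonneg ‖U i - P (U i)‖]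
    -- Bessel: ∑ t ≤ finrank W
    have htsum : ∑ i, t i ≤ (Module.finrank ℂ W : ℝ) := besselBound W U hU
    -- assemble
    have hA : ∑ a, ∑ b, ‖Y a b - X a b‖ ^ 2 ≥ ∑ i, σ i ^ 2 - ∑ i, σ i ^ 2 * t i := by
      have h1 : ∑ a, ∑ b, ‖Y a b - X a b‖ ^ 2 = ∑ b, ‖ycol b - xcol b‖ ^ 2 := by
        rw [colNorm (fun a b => Y a b - X a b)]
        rfl
      have h2 : ∀ b, ‖ycol b - xcol b‖ ^ 2 ≥ ‖ycol b‖ ^ 2 - ‖P (ycol b)‖ ^ 2 := by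
        intro b
        have h3 := pyth (ycol b)
        have h4 := hmindist b
        nlinarith [norm_nonneg (ycol b - P (ycol b)), norm_nonneg (ycol b - xcol b)]
      calc ∑ a, ∑ b, ‖Y a b - X a b‖ ^ 2 = ∑ b, ‖ycol b - xcol b‖ ^ 2 := h1
        _ ≥ ∑ b, (‖ycol b‖ ^ 2 - ‖P (ycol b)‖ ^ 2) := Finset.sum_le_sum fun b _ => h2 b
        _ = ∑ i, σ i ^ 2 - ∑ i, σ i ^ 2 * t i := by
            rw [Finset.sum_sub_distrib, hsumY, hsumP]
    have hB : (X.rank : ℝ) ≥ ∑ i, t i :=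
      le_trans htsum (Nat.cast_le.mpr hWrank)
    have hC : M ≤ (∑ i, σ i ^ 2 - ∑ i, σ i ^ 2 * t i) / 2 + lam * ∑ i, t i := by
      have heq : (∑ i, σ i ^ 2 - ∑ i, σ i ^ 2 * t i) / 2 + lam * ∑ i, t i
          = ∑ i, ((σ i ^ 2 - σ i ^ 2 * t i) / 2 + lam * t i) := by
        rw [Finset.sum_add_distrib, ← Finset.sum_sub_distrib, Finset.mul_sum, Finset.sum_div]
      rw [heq, hM]
      refine Finset.sum_le_sum fun i _ => ?_
      rcases le_total (σ i ^ 2 / 2) lam with h | h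
      · rw [min_eq_left h]; nlinarith [ht0 i, ht1 i]
      · rw [min_eq_right h]; nlinarith [ht0 i, ht1 i]
    have hlamrank : lam * ∑ i, t i ≤ lam * (X.rank : ℝ) :=
      mul_le_mul_of_nonneg_left hB (le_of_lt hlam)
    nlinarith [hA, hC, hlamrank]
  intro X
  exact le_trans part1 (part2 X)
end

section
/- Let B, Y ∈ ℂ^{p×q}, with Y = U Σ V^H a singular value decomposition where Σ has diagonal entries σ₁ ≥ ... ≥ σ_min(p,q) ≥ 0, and let B have singular values β₁ ≥ ... ≥ β_min(p,q) ≥ 0. Then Re(tr(B^H Y)) ≤ Σ_i β_i σ_i. -/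
open Finset

/-- Rearrangement-type inequality for doubly substochastic matrices. -/
lemma substoch_ineq (n : ℕ) (β σ : Fin n → ℝ)
    (hβdec : ∀ i j : Fin n, i ≤ j → β j ≤ β i) (hβnn : ∀ i, 0 ≤ β i)
    (hσdec : ∀ i j : Fin n, i ≤ j → σ j ≤ σ i) (hσnn : ∀ i, 0 ≤ σ i)
    (D : Fin n → Fin n → ℝ) (hDnn : ∀ i j, 0 ≤ D i j)
    (hrow : ∀ i, ∑ j, D i j ≤ 1) (hcol : ∀ j, ∑ i, D i j ≤ 1) :
    ∑ i, ∑ j, β i * σ j * D i j ≤ ∑ i, β i * σ i := by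
  classical
  set b : ℕ → ℝ := fun i => if h : i < n then β ⟨i, h⟩ else 0 with hbdef
  set s : ℕ → ℝ := fun i => if h : i < n then σ ⟨i, h⟩ else 0 with hsdef
  set d : ℕ → ℕ → ℝ := fun i j =>
    if h : i < n ∧ j < n then D ⟨i, h.1⟩ ⟨j, h.2⟩ else 0 with hddef
  have hbnn : ∀ k, 0 ≤ b k := by
    intro k; simp only [hbdef]; split_ifs with h
    · exact hβnn _
    · exact le_refl 0
  have hsnn : ∀ k, 0 ≤ s k := by
    intro k; simp only [hsdef]; split_ifs with h
    · exact hσnn _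
    · exact le_refl 0
  have hdnn : ∀ i j, 0 ≤ d i j := by
    intro i j; simp only [hddef]; split_ifs with h
    · exact hDnn _ _
    · exact le_refl 0
  have hbmono : ∀ k, b (k + 1) ≤ b k := by
    intro k; simp only [hbdef]; split_ifs with h1 h2 h2
    · exact hβdec ⟨k, h2⟩ ⟨k + 1, h1⟩ (by simp)
    · omega
    · exact hβnn _
    · exact le_refl 0
  have hsmono : ∀ k, s (k + 1) ≤ s k := by
    intro k; simp only [hsdef]; split_ifs with h1 h2 h2
    · exact hσdec ⟨k, h2⟩ ⟨k + 1, h1⟩ (by simp)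
    · omega
    · exact hσnn _
    · exact le_refl 0
  -- telescoping
  have tele : ∀ (f : ℕ → ℝ), f n = 0 → ∀ i, i < n →
      f i = ∑ k ∈ Finset.range n, if i ≤ k then (f k - f (k + 1)) else 0 := by
    intro f hfn i hi
    have hfilter : (Finset.range n).filter (fun k => i ≤ k) = Finset.Ico i n := by
      ext k; simp [Finset.mem_filter, Finset.mem_Ico, Finset.mem_range]; omega
    rw [← Finset.sum_filter, hfilter, Finset.sum_Ico_eq_sub _ (le_of_lt hi),
      Finset.sum_range_sub' f, Finset.sum_range_sub' f, hfn]
    ring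
  have hbn : b n = 0 := by simp [hbdef]
  have hsn : s n = 0 := by simp [hsdef]
  -- convert to range sums
  have hLHS : ∑ i, ∑ j, β i * σ j * D i j
      = ∑ i ∈ Finset.range n, ∑ j ∈ Finset.range n, b i * s j * d i j := by
    rw [← Fin.sum_univ_eq_sum_range]
    refine Finset.sum_congr rfl fun i _ => ?_
    rw [← Fin.sum_univ_eq_sum_range]
    refine Finset.sum_congr rfl fun j _ => ?_
    simp [hbdef, hsdef, hddef, i.isLt, j.isLt]
  have hRHS : ∑ i, β i * σ i = ∑ i ∈ Finset.range n, b i * s i := by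
    rw [← Fin.sum_univ_eq_sum_range]
    refine Finset.sum_congr rfl fun i _ => ?_
    simp [hbdef, hsdef, i.isLt]
  rw [hLHS, hRHS]
  set δ : ℕ → ℝ := fun k => b k - b (k + 1) with hδdef
  set ε : ℕ → ℝ := fun l => s l - s (l + 1) with hεdef
  have hδnn : ∀ k, 0 ≤ δ k := fun k => sub_nonneg.mpr (hbmono k)
  have hεnn : ∀ l, 0 ≤ ε l := fun l => sub_nonneg.mpr (hsmono l)
  -- rewrite LHS
  have hL2 : ∑ i ∈ Finset.range n, ∑ j ∈ Finset.range n, b i * s j * d i j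
      = ∑ k ∈ Finset.range n, ∑ l ∈ Finset.range n, δ k * ε l *
          (∑ i ∈ Finset.range n, ∑ j ∈ Finset.range n,
            if i ≤ k then (if j ≤ l then d i j else 0) else 0) := by
    have step1 : ∑ i ∈ Finset.range n, ∑ j ∈ Finset.range n, b i * s j * d i j
        = ∑ i ∈ Finset.range n, ∑ j ∈ Finset.range n, ∑ k ∈ Finset.range n,
            ∑ l ∈ Finset.range n,
            δ k * ε l * (if i ≤ k then (if j ≤ l then d i j else 0) else 0) := by
      refine Finset.sum_congr rfl fun i hi => Finset.sum_congr rfl fun j hj => ?_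
      rw [tele b hbn i (Finset.mem_range.mp hi), tele s hsn j (Finset.mem_range.mp hj)]
      rw [Finset.sum_mul_sum, Finset.sum_mul]
      refine Finset.sum_congr rfl fun k _ => ?_
      rw [Finset.sum_mul]
      refine Finset.sum_congr rfl fun l _ => ?_
      simp only [hδdef, hεdef]
      split_ifs <;> ring
    have swap4 : ∀ (f : ℕ → ℕ → ℕ → ℕ → ℝ),
        ∑ i ∈ Finset.range n, ∑ j ∈ Finset.range n, ∑ k ∈ Finset.range n,
          ∑ l ∈ Finset.range n, f i j k l
        = ∑ k ∈ Finset.range n, ∑ l ∈ Finset.range n, ∑ i ∈ Finset.range n,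
          ∑ j ∈ Finset.range n, f i j k l := by
      intro f
      calc ∑ i ∈ Finset.range n, ∑ j ∈ Finset.range n, ∑ k ∈ Finset.range n,
            ∑ l ∈ Finset.range n, f i j k l
          = ∑ i ∈ Finset.range n, ∑ k ∈ Finset.range n, ∑ j ∈ Finset.range n,
            ∑ l ∈ Finset.range n, f i j k l :=
            Finset.sum_congr rfl fun i _ => Finset.sum_comm
        _ = ∑ k ∈ Finset.range n, ∑ i ∈ Finset.range n, ∑ j ∈ Finset.range n,
            ∑ l ∈ Finset.range n, f i j k l := Finset.sum_comm
        _ = ∑ k ∈ Finset.range n, ∑ i ∈ Finset.range n, ∑ l ∈ Finset.range n,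
            ∑ j ∈ Finset.range n, f i j k l :=
            Finset.sum_congr rfl fun k _ => Finset.sum_congr rfl fun i _ => Finset.sum_comm
        _ = ∑ k ∈ Finset.range n, ∑ l ∈ Finset.range n, ∑ i ∈ Finset.range n,
            ∑ j ∈ Finset.range n, f i j k l :=
            Finset.sum_congr rfl fun k _ => Finset.sum_comm
    rw [step1, swap4]
    simp only [Finset.mul_sum]
  -- rewrite RHS
  have hR2 : ∑ i ∈ Finset.range n, b i * s i
      = ∑ k ∈ Finset.range n, ∑ l ∈ Finset.range n, δ k * ε l *
          (∑ i ∈ Finset.range n, if i ≤ k ∧ i ≤ l then (1 : ℝ) else 0) := by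
    have step1 : ∑ i ∈ Finset.range n, b i * s i
        = ∑ i ∈ Finset.range n, ∑ k ∈ Finset.range n, ∑ l ∈ Finset.range n,
            δ k * ε l * (if i ≤ k ∧ i ≤ l then (1 : ℝ) else 0) := by
      refine Finset.sum_congr rfl fun i hi => ?_
      rw [tele b hbn i (Finset.mem_range.mp hi), tele s hsn i (Finset.mem_range.mp hi)]
      rw [Finset.sum_mul]
      refine Finset.sum_congr rfl fun k _ => ?_
      rw [Finset.mul_sum]
      refine Finset.sum_congr rfl fun l _ => ?_
      simp only [hδdef, hεdef]
      split_ifs <;> first | (exfalso; omega) | ring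
    have swap3 : ∀ (f : ℕ → ℕ → ℕ → ℝ),
        ∑ i ∈ Finset.range n, ∑ k ∈ Finset.range n, ∑ l ∈ Finset.range n, f i k l
        = ∑ k ∈ Finset.range n, ∑ l ∈ Finset.range n, ∑ i ∈ Finset.range n, f i k l := by
      intro f
      calc ∑ i ∈ Finset.range n, ∑ k ∈ Finset.range n, ∑ l ∈ Finset.range n, f i k l
          = ∑ k ∈ Finset.range n, ∑ i ∈ Finset.range n, ∑ l ∈ Finset.range n, f i k l :=
            Finset.sum_comm
        _ = ∑ k ∈ Finset.range n, ∑ l ∈ Finset.range n, ∑ i ∈ Finset.range n, f i k l :=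
            Finset.sum_congr rfl fun k _ => Finset.sum_comm
    rw [step1, swap3]
    simp only [Finset.mul_sum]
  rw [hL2, hR2]
  refine Finset.sum_le_sum fun k hk => Finset.sum_le_sum fun l hl => ?_
  refine mul_le_mul_of_nonneg_left ?_ (mul_nonneg (hδnn k) (hεnn l))
  -- key: T k l ≤ N k l
  rcases le_total k l with hkl | hkl
  · -- bound by row sums
    have : ∑ i ∈ Finset.range n, (if i ≤ k ∧ i ≤ l then (1 : ℝ) else 0)
        = ∑ i ∈ Finset.range n, (if i ≤ k then (1 : ℝ) else 0) := by
      refine Finset.sum_congr rfl fun i _ => ?_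
      split_ifs <;> first | rfl | (exfalso; omega)
    rw [this]
    refine Finset.sum_le_sum fun i hi => ?_
    split_ifs with h
    · calc ∑ j ∈ Finset.range n, (if j ≤ l then d i j else 0)
          ≤ ∑ j ∈ Finset.range n, d i j := by
            refine Finset.sum_le_sum fun j _ => ?_
            split_ifs
            · exact le_refl _
            · exact hdnn i j
        _ ≤ 1 := by
            have hin : i < n := Finset.mem_range.mp hi
            have : ∑ j ∈ Finset.range n, d i j = ∑ j : Fin n, D ⟨i, hin⟩ j := by
              rw [← Fin.sum_univ_eq_sum_range]
              refine Finset.sum_congr rfl fun j _ => ?_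
              simp [hddef, hin, j.isLt]
            rw [this]; exact hrow _
    · simp
  · -- bound by column sums
    have hNrw : ∑ i ∈ Finset.range n, (if i ≤ k ∧ i ≤ l then (1 : ℝ) else 0)
        = ∑ j ∈ Finset.range n, (if j ≤ l then (1 : ℝ) else 0) := by
      refine Finset.sum_congr rfl fun i _ => ?_
      split_ifs <;> first | rfl | (exfalso; omega)
    rw [hNrw, Finset.sum_comm]
    refine Finset.sum_le_sum fun j hj => ?_
    have hswap : ∑ i ∈ Finset.range n, (if i ≤ k then (if j ≤ l then d i j else 0) else 0)
        = if j ≤ l then ∑ i ∈ Finset.range n, (if i ≤ k then d i j else 0) else 0 := by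
      split_ifs with h
      · refine Finset.sum_congr rfl fun i _ => ?_
        split_ifs <;> first | rfl | (exfalso; omega)
      · refine Finset.sum_eq_zero fun i _ => ?_
        split_ifs <;> first | rfl | (exfalso; omega)
    rw [hswap]
    split_ifs with h
    · calc ∑ i ∈ Finset.range n, (if i ≤ k then d i j else 0)
          ≤ ∑ i ∈ Finset.range n, d i j := by
            refine Finset.sum_le_sum fun i _ => ?_
            split_ifs
            · exact le_refl _
            · exact hdnn i j
        _ ≤ 1 := by
            have hjn : j < n := Finset.mem_range.mp hj
            have : ∑ i ∈ Finset.range n, d i j = ∑ i : Fin n, D i ⟨j, hjn⟩ := by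
              rw [← Fin.sum_univ_eq_sum_range]
              refine Finset.sum_congr rfl fun i _ => ?_
              simp [hddef, hjn, i.isLt]
            rw [this]; exact hcol _
    · exact le_refl 0

/-- Generic 4-fold sum swap. -/
lemma swap4gen {M : Type*} [AddCommMonoid M] {α β γ δ : Type*}
    [Fintype α] [Fintype β] [Fintype γ] [Fintype δ] (f : α → β → γ → δ → M) :
    ∑ a, ∑ b, ∑ i, ∑ j, f a b i j = ∑ i, ∑ j, ∑ a, ∑ b, f a b i j := by
  calc ∑ a, ∑ b, ∑ i, ∑ j, f a b i j
      = ∑ a, ∑ i, ∑ b, ∑ j, f a b i j :=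
        Finset.sum_congr rfl fun a _ => Finset.sum_comm
    _ = ∑ i, ∑ a, ∑ b, ∑ j, f a b i j := Finset.sum_comm
    _ = ∑ i, ∑ a, ∑ j, ∑ b, f a b i j :=
        Finset.sum_congr rfl fun i _ => Finset.sum_congr rfl fun a _ => Finset.sum_comm
    _ = ∑ i, ∑ j, ∑ a, ∑ b, f a b i j :=
        Finset.sum_congr rfl fun i _ => Finset.sum_comm

/-- Bessel-type bound for two orthonormal families. -/
lemma bessel_bound {m N : ℕ} (u w : Fin m → Fin N → ℂ)
    (hu : ∀ i i', ∑ a, (starRingEnd ℂ) (u i a) * u i' a = if i = i' then 1 else 0)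
    (hw : ∀ j j', ∑ a, (starRingEnd ℂ) (w j a) * w j' a = if j = j' then 1 else 0)
    (i : Fin m) :
    ∑ j, ‖(∑ a, (starRingEnd ℂ) (u i a) * w j a : ℂ)‖ ^ 2 ≤ 1 := by
  classical
  have hip : ∀ (x y : Fin N → ℂ),
      (inner ℂ ((WithLp.equiv 2 (Fin N → ℂ)).symm x) ((WithLp.equiv 2 (Fin N → ℂ)).symm y) : ℂ)
        = ∑ a, (starRingEnd ℂ) (x a) * y a := by
    intro x y
    simp [PiLp.inner_apply, RCLike.inner_apply, WithLp.equiv_symm_apply, PiLp.toLp_apply, mul_comm]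
  have hWo : Orthonormal ℂ (fun j => (WithLp.equiv 2 (Fin N → ℂ)).symm (w j)) :=
    orthonormal_iff_ite.mpr fun j j' => by rw [hip]; exact hw j j'
  have hb := hWo.sum_inner_products_le ((WithLp.equiv 2 (Fin N → ℂ)).symm (u i))
    (s := Finset.univ)
  have hnorm : ‖(WithLp.equiv 2 (Fin N → ℂ)).symm (u i)‖ ^ 2 = 1 := by
    have h1 := inner_self_eq_norm_sq_to_K (𝕜 := ℂ) ((WithLp.equiv 2 (Fin N → ℂ)).symm (u i))
    rw [hip] at h1
    rw [hu i i] at h1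
    simp only [if_pos rfl] at h1
    have h2 : ((‖(WithLp.equiv 2 (Fin N → ℂ)).symm (u i)‖ : ℂ)) ^ 2 = 1 := h1.symm
    exact_mod_cast h2
  rw [hnorm] at hb
  refine le_trans (le_of_eq ?_) hb
  refine Finset.sum_congr rfl fun j _ => ?_
  have hconj : (inner ℂ ((WithLp.equiv 2 (Fin N → ℂ)).symm (w j))
      ((WithLp.equiv 2 (Fin N → ℂ)).symm (u i)) : ℂ)
      = (starRingEnd ℂ) (∑ a, (starRingEnd ℂ) (u i a) * w j a) := by
    rw [hip, map_sum]
    refine Finset.sum_congr rfl fun a _ => ?_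
    rw [map_mul, Complex.conj_conj]
    ring
  rw [hconj, RCLike.norm_conj]

/-- von Neumann trace inequality: Re(tr(Bᴴ Y)) ≤ Σ_i β_i σ_i, where β_i and
σ_i are the (decreasingly ordered, nonnegative) singular values of B and Y. -/
theorem stmt17 (p q : ℕ)
    (uB : Fin (min p q) → Fin p → ℂ) (vB : Fin (min p q) → Fin q → ℂ)
    (huB : ∀ i i', ∑ a, (starRingEnd ℂ) (uB i a) * uB i' a = if i = i' then 1 else 0)
    (hvB : ∀ i i', ∑ b, (starRingEnd ℂ) (vB i b) * vB i' b = if i = i' then 1 else 0)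
    (uY : Fin (min p q) → Fin p → ℂ) (vY : Fin (min p q) → Fin q → ℂ)
    (huY : ∀ i i', ∑ a, (starRingEnd ℂ) (uY i a) * uY i' a = if i = i' then 1 else 0)
    (hvY : ∀ i i', ∑ b, (starRingEnd ℂ) (vY i b) * vY i' b = if i = i' then 1 else 0)
    (β σ : Fin (min p q) → ℝ)
    (hβdec : ∀ i j, i ≤ j → β j ≤ β i) (hβnn : ∀ i, 0 ≤ β i)
    (hσdec : ∀ i j, i ≤ j → σ j ≤ σ i) (hσnn : ∀ i, 0 ≤ σ i)
    (B Y : Matrix (Fin p) (Fin q) ℂ)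
    (hB : B = fun a b => ∑ i, (β i : ℂ) * uB i a * (starRingEnd ℂ) (vB i b))
    (hY : Y = fun a b => ∑ i, (σ i : ℂ) * uY i a * (starRingEnd ℂ) (vY i b)) :
    (∑ a, ∑ b, (starRingEnd ℂ) (B a b) * Y a b).re ≤ ∑ i, β i * σ i := by
  classical
  set X : Fin (min p q) → Fin (min p q) → ℂ :=
    fun i j => ∑ a, (starRingEnd ℂ) (uB i a) * uY j a with hX
  set W : Fin (min p q) → Fin (min p q) → ℂ :=
    fun i j => ∑ b, (starRingEnd ℂ) (vB i b) * vY j b with hW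
  -- Bessel bounds
  have hXrow : ∀ i, ∑ j, ‖X i j‖ ^ 2 ≤ 1 := fun i => bessel_bound uB uY huB huY i
  have hWrow : ∀ i, ∑ j, ‖W i j‖ ^ 2 ≤ 1 := fun i => bessel_bound vB vY hvB hvY i
  have hXcol : ∀ j, ∑ i, ‖X i j‖ ^ 2 ≤ 1 := by
    intro j
    have hb := bessel_bound uY uB huY huB j
    refine le_trans (le_of_eq ?_) hb
    refine Finset.sum_congr rfl fun i _ => ?_
    have : (∑ a, (starRingEnd ℂ) (uY j a) * uB i a : ℂ) = (starRingEnd ℂ) (X i j) := by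
      rw [hX, map_sum]
      refine Finset.sum_congr rfl fun a _ => ?_
      rw [map_mul, Complex.conj_conj]
      ring
    rw [this, RCLike.norm_conj]
  have hWcol : ∀ j, ∑ i, ‖W i j‖ ^ 2 ≤ 1 := by
    intro j
    have hb := bessel_bound vY vB hvY hvB j
    refine le_trans (le_of_eq ?_) hb
    refine Finset.sum_congr rfl fun i _ => ?_
    have : (∑ b, (starRingEnd ℂ) (vY j b) * vB i b : ℂ) = (starRingEnd ℂ) (W i j) := by
      rw [hW, map_sum]
      refine Finset.sum_congr rfl fun b _ => ?_
      rw [map_mul, Complex.conj_conj]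
      ring
    rw [this, RCLike.norm_conj]
  -- the substochastic matrix
  set D : Fin (min p q) → Fin (min p q) → ℝ :=
    fun i j => (‖X i j‖ ^ 2 + ‖W i j‖ ^ 2) / 2 with hD
  have hDnn : ∀ i j, 0 ≤ D i j := by
    intro i j; rw [hD]; positivity
  have hrow : ∀ i, ∑ j, D i j ≤ 1 := by
    intro i
    have heq : ∑ j, D i j = ((∑ j, ‖X i j‖ ^ 2) + ∑ j, ‖W i j‖ ^ 2) / 2 := by
      rw [hD, ← Finset.sum_add_distrib, Finset.sum_div]
    rw [heq]
    have := hXrow i; have := hWrow i; linarith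
  have hcol : ∀ j, ∑ i, D i j ≤ 1 := by
    intro j
    have heq : ∑ i, D i j = ((∑ i, ‖X i j‖ ^ 2) + ∑ i, ‖W i j‖ ^ 2) / 2 := by
      rw [hD, ← Finset.sum_add_distrib, Finset.sum_div]
    rw [heq]
    have := hXcol j; have := hWcol j; linarith
  -- trace identity
  have hpoint : ∀ a b, (starRingEnd ℂ) (B a b) * Y a b
      = ∑ i, ∑ j, ((β i : ℂ) * (σ j : ℂ)) *
          (((starRingEnd ℂ) (uB i a) * uY j a) * (vB i b * (starRingEnd ℂ) (vY j b))) := by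
    intro a b
    simp only [hB, hY]
    rw [map_sum, Finset.sum_mul_sum]
    refine Finset.sum_congr rfl fun i _ => Finset.sum_congr rfl fun j _ => ?_
    simp only [map_mul, Complex.conj_ofReal, Complex.conj_conj]
    ring
  have hkey : (∑ a, ∑ b, (starRingEnd ℂ) (B a b) * Y a b)
      = ∑ i, ∑ j, ((β i : ℂ) * (σ j : ℂ)) * (X i j * (starRingEnd ℂ) (W i j)) := by
    calc ∑ a, ∑ b, (starRingEnd ℂ) (B a b) * Y a b
        = ∑ a, ∑ b, ∑ i, ∑ j, ((β i : ℂ) * (σ j : ℂ)) *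
            (((starRingEnd ℂ) (uB i a) * uY j a) * (vB i b * (starRingEnd ℂ) (vY j b))) :=
          Finset.sum_congr rfl fun a _ => Finset.sum_congr rfl fun b _ => hpoint a b
      _ = ∑ i, ∑ j, ∑ a, ∑ b, ((β i : ℂ) * (σ j : ℂ)) *
            (((starRingEnd ℂ) (uB i a) * uY j a) * (vB i b * (starRingEnd ℂ) (vY j b))) :=
          swap4gen _
      _ = ∑ i, ∑ j, ((β i : ℂ) * (σ j : ℂ)) * (X i j * (starRingEnd ℂ) (W i j)) := by
          refine Finset.sum_congr rfl fun i _ => Finset.sum_congr rfl fun j _ => ?_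
          have hWconj : (starRingEnd ℂ) (W i j) = ∑ b, vB i b * (starRingEnd ℂ) (vY j b) := by
            rw [hW, map_sum]
            refine Finset.sum_congr rfl fun b _ => ?_
            rw [map_mul, Complex.conj_conj]
          rw [hWconj, hX, Finset.sum_mul_sum, Finset.mul_sum]
          refine Finset.sum_congr rfl fun a _ => ?_
          rw [Finset.mul_sum]
  -- real part bound
  rw [hkey, Complex.re_sum]
  have hterm : ∀ i, (∑ j, ((β i : ℂ) * (σ j : ℂ)) * (X i j * (starRingEnd ℂ) (W i j))).re
      ≤ ∑ j, β i * σ j * D i j := by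
    intro i
    rw [Complex.re_sum]
    refine Finset.sum_le_sum fun j _ => ?_
    have h1 : ((β i : ℂ) * (σ j : ℂ)) * (X i j * (starRingEnd ℂ) (W i j))
        = ((β i * σ j : ℝ) : ℂ) * (X i j * (starRingEnd ℂ) (W i j)) := by
      push_cast; ring
    rw [h1, Complex.re_ofReal_mul]
    refine mul_le_mul_of_nonneg_left ?_ (mul_nonneg (hβnn i) (hσnn j))
    have h2 : (X i j * (starRingEnd ℂ) (W i j)).re ≤ ‖X i j‖ * ‖W i j‖ := by
      calc (X i j * (starRingEnd ℂ) (W i j)).re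
          ≤ ‖X i j * (starRingEnd ℂ) (W i j)‖ := Complex.re_le_norm _
        _ = ‖X i j‖ * ‖W i j‖ := by
            rw [norm_mul, RCLike.norm_conj]
    refine h2.trans ?_
    rw [hD]
    nlinarith [sq_nonneg (‖X i j‖ - ‖W i j‖), norm_nonneg (X i j), norm_nonneg (W i j)]
  calc ∑ i, (∑ j, ((β i : ℂ) * (σ j : ℂ)) * (X i j * (starRingEnd ℂ) (W i j))).re
      ≤ ∑ i, ∑ j, β i * σ j * D i j := Finset.sum_le_sum fun i _ => hterm i
    _ ≤ ∑ i, β i * σ i :=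
        substoch_ineq (min p q) β σ hβdec hβnn hσdec hσnn D hDnn hrow hcol
end
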